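/- arXiv:2512.02744 — 11 statements merged into one kernel-verified Lean document; each statement's English description precedes it below -/
import Mathlib

section
/- Let f : ℝ^K → ℝ be differentiable and concave, let P be a symmetric positive-definite K×K matrix, and let θ₀ ∈ ℝ^K. Suppose θ* maximizes θ ↦ f(θ) − (1/2)(θ−θ₀)ᵀP(θ−θ₀) over ℝ^K. Then ⟨θ* − θ₀, ∇f(θ₀)⟩ ≥ 0. -/
open Matrix
open scoped RealInnerProductSpace

noncomputable section

theorem stmt0 {K : ℕ} (f : EuclideanSpace ℝ (Fin K) → ℝ)
    (hdiff : Differentiable ℝ f) (hconc : ConcaveOn ℝ Set.univ f)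
    (P : Matrix (Fin K) (Fin K) ℝ) (hP : P.PosDef)
    (θ₀ θs : EuclideanSpace ℝ (Fin K))
    (hmax : ∀ θ : EuclideanSpace ℝ (Fin K),
      f θ - (1/2) * ((θ - θ₀) ⬝ᵥ P.mulVec (θ - θ₀)) ≤
        f θs - (1/2) * ((θs - θ₀) ⬝ᵥ P.mulVec (θs - θ₀))) :
    0 ≤ ⟪θs - θ₀, gradient f θ₀⟫ := by
  set v : EuclideanSpace ℝ (Fin K) := θs - θ₀ with hv
  -- quadratic form nonneg
  have hq : 0 ≤ (θs - θ₀) ⬝ᵥ P.mulVec (θs - θ₀) := by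
    rcases eq_or_ne (θs - θ₀) 0 with h0 | h0
    · simp [h0]
    · exact le_of_lt (by simpa using hP.dotProduct_mulVec_pos (x := WithLp.ofLp (θs - θ₀)) (fun h => h0 (WithLp.ofLp_injective 2 (by rw [h, WithLp.ofLp_zero]))))
  -- f θ₀ ≤ f θs
  have hle : f θ₀ ≤ f θs := by
    have h := hmax θ₀
    simp only [sub_self] at h
    simp at h
    nlinarith [h]
  -- the 1D function
  set g : ℝ → ℝ := fun t => f (θ₀ + t • v) with hg
  have hgconc : ConcaveOn ℝ Set.univ g := by
    have : g = f ∘ (AffineMap.lineMap θ₀ θs : ℝ →ᵃ[ℝ] _) := by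
      funext t
      simp [hg, AffineMap.lineMap_apply, hv]
      congr 1
      module
    rw [this]
    have := hconc.comp_affineMap (AffineMap.lineMap θ₀ θs : ℝ →ᵃ[ℝ] _)
    simpa using this
  -- derivative of g at 0
  have hinner : HasDerivAt (fun t : ℝ => θ₀ + t • v) v 0 := by
    simpa using ((hasDerivAt_id (0:ℝ)).smul_const v).const_add θ₀
  have hgd : HasDerivAt g ((fderiv ℝ f θ₀) v) 0 := by
    have := ((hdiff (θ₀ + (0:ℝ) • v)).hasFDerivAt).comp_hasDerivAt 0 hinner
    simp only [zero_smul, add_zero] at this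
    exact this
  -- concavity: slope ≤ derivative
  have hslope := hgconc.slope_le_of_hasDerivAt (Set.mem_univ (0:ℝ))
    (Set.mem_univ (1:ℝ)) one_pos hgd
  have hg0 : g 0 = f θ₀ := by simp [hg]
  have hg1 : g 1 = f θs := by simp [hg, hv]
  rw [slope_def_field] at hslope
  have hkey : 0 ≤ (fderiv ℝ f θ₀) v := by
    have : f θs - f θ₀ ≤ (fderiv ℝ f θ₀) v := by
      simpa [hg0, hg1] using hslope
    linarith
  have hgrad : ⟪θs - θ₀, gradient f θ₀⟫ = (fderiv ℝ f θ₀) v := by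
    rw [real_inner_comm]
    simp [gradient, hv, InnerProductSpace.toDual_symm_apply]
  rw [hgrad]; exact hkey
end
end

section
/- Let f : ℝ^K → ℝ be differentiable, and suppose there is α ≥ 0 such that θ ↦ f(θ) + (α/2)‖θ‖² is concave. Let P be symmetric positive definite with largest eigenvalue λmax(P), and suppose θ ↦ f(θ) − (1/2)(θ−θ₀)ᵀP(θ−θ₀) is strictly concave with maximizer θ_im. Define the explicit update θ_ex := θ₀ + P⁻¹∇f(θ₀). Then (θ_im−θ₀)ᵀP(θ_im−θ₀) ≤ (λmax(P)/(λmax(P)+α))² · (θ_ex−θ₀)ᵀP(θ_ex−θ₀). -/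
open Matrix

noncomputable section

/-- The gradient of `f`, viewed as a plain vector in `Fin K → ℝ`. -/
def gradV {K : ℕ} (f : EuclideanSpace ℝ (Fin K) → ℝ) (x : EuclideanSpace ℝ (Fin K)) :
    Fin K → ℝ := (gradient f x : EuclideanSpace ℝ (Fin K))

section aux

variable {K : ℕ}

/-- Rayleigh-type bound: `uᵀ P u ≤ lmax * uᵀu`. -/
lemma aux_rayleigh {P : Matrix (Fin K) (Fin K) ℝ} (hP : P.PosDef)
    {lmax : ℝ} (hub : ∀ i, hP.1.eigenvalues i ≤ lmax) (u : Fin K → ℝ) :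
    u ⬝ᵥ P *ᵥ u ≤ lmax * (u ⬝ᵥ u) := by
  set U : Matrix (Fin K) (Fin K) ℝ := (hP.1.eigenvectorUnitary : Matrix (Fin K) (Fin K) ℝ) with hU
  have hUmem : U ∈ Matrix.unitaryGroup (Fin K) ℝ := hP.1.eigenvectorUnitary.2
  have hUU : U * star U = 1 := (Matrix.mem_unitaryGroup_iff).mp hUmem
  have hdiag : (Matrix.diagonal (fun i => lmax - hP.1.eigenvalues i) : Matrix (Fin K) (Fin K) ℝ)
      = lmax • (1 : Matrix (Fin K) (Fin K) ℝ)
        - Matrix.diagonal (RCLike.ofReal ∘ hP.1.eigenvalues) := by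
    ext i j
    by_cases h : i = j <;>
      simp [Matrix.diagonal_apply, h, Matrix.one_apply, Matrix.smul_apply]
  have key : lmax • (1 : Matrix (Fin K) (Fin K) ℝ) - P
      = U * Matrix.diagonal (fun i => lmax - hP.1.eigenvalues i) * star U := by
    rw [hdiag, Matrix.mul_sub, Matrix.sub_mul]
    congr 1
    · rw [Matrix.mul_smul, Matrix.mul_one, Matrix.smul_mul, hUU]
    · rw [hU]; exact hP.1.spectral_theorem
  have hpsd : (lmax • (1 : Matrix (Fin K) (Fin K) ℝ) - P).PosSemidef := by
    rw [key, Matrix.star_eq_conjTranspose]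
    exact Matrix.PosSemidef.mul_mul_conjTranspose_same
      (Matrix.posSemidef_diagonal_iff.mpr fun i => sub_nonneg.mpr (hub i)) U
  have h0 := hpsd.dotProduct_mulVec_nonneg u
  have hstar : star u = u := by funext i; simp
  rw [hstar, Matrix.sub_mulVec, dotProduct_sub, Matrix.smul_mulVec,
    Matrix.one_mulVec, dotProduct_smul] at h0
  simp only [smul_eq_mul] at h0
  linarith

open scoped MatrixOrder Matrix.Norms.L2Operator in
lemma aux_sq {P : Matrix (Fin K) (Fin K) ℝ} (hP : P.PosSemidef) :
    ∃ B : Matrix (Fin K) (Fin K) ℝ, P = star B * B :=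
  CStarAlgebra.nonneg_iff_eq_star_mul_self.mp hP.nonneg

/-- Cauchy-Schwarz for a positive semidefinite bilinear form. -/
lemma aux_cs {P : Matrix (Fin K) (Fin K) ℝ} (hP : P.PosSemidef) (u v : Fin K → ℝ) :
    (u ⬝ᵥ P *ᵥ v) ^ 2 ≤ (u ⬝ᵥ P *ᵥ u) * (v ⬝ᵥ P *ᵥ v) := by
  obtain ⟨B, hB⟩ := aux_sq hP
  rw [Matrix.star_eq_conjTranspose] at hB
  subst hB
  have h : ∀ x y : Fin K → ℝ, x ⬝ᵥ (Bᴴ * B) *ᵥ y = (B *ᵥ x) ⬝ᵥ (B *ᵥ y) := by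
    intro x y
    rw [← Matrix.mulVec_mulVec, Matrix.dotProduct_mulVec, Matrix.vecMul_conjTranspose]
    have : star x = x := by funext i; simp
    rw [this]
    have : star (B *ᵥ x) = B *ᵥ x := by funext i; simp
    rw [this]
  rw [h u v, h u u, h v v]
  have := Finset.sum_mul_sq_le_sq_mul_sq Finset.univ (B *ᵥ u) (B *ᵥ v)
  simpa [dotProduct, pow_two] using this

lemma aux_dot_self (x : EuclideanSpace ℝ (Fin K)) :
    (x : Fin K → ℝ) ⬝ᵥ (x : Fin K → ℝ) = ‖x‖ ^ 2 := by
  rw [← real_inner_self_eq_norm_sq, PiLp.inner_apply]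
  simp [dotProduct, pow_two]

lemma aux_inner_eq_dot (x y : EuclideanSpace ℝ (Fin K)) :
    (inner ℝ x y : ℝ) = (x : Fin K → ℝ) ⬝ᵥ (y : Fin K → ℝ) := by
  simp [PiLp.inner_apply, dotProduct, mul_comm]

lemma aux_fderiv_eq_grad (f : EuclideanSpace ℝ (Fin K) → ℝ) {x : EuclideanSpace ℝ (Fin K)}
    (hdiff : DifferentiableAt ℝ f x) (u : EuclideanSpace ℝ (Fin K)) :
    fderiv ℝ f x u = gradV f x ⬝ᵥ (u : Fin K → ℝ) := by
  have h := hdiff.hasGradientAt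
  rw [hasGradientAt_iff_hasFDerivAt] at h
  rw [h.fderiv]
  rw [← aux_inner_eq_dot]
  simp [gradV, InnerProductSpace.toDual_apply_apply]

end aux

theorem stmt1 {K : ℕ} (f : EuclideanSpace ℝ (Fin K) → ℝ)
    (hdiff : Differentiable ℝ f) (α : ℝ) (hα : 0 ≤ α)
    (hconc : ConcaveOn ℝ Set.univ (fun θ => f θ + α / 2 * ‖θ‖ ^ 2))
    (P : Matrix (Fin K) (Fin K) ℝ) (hP : P.PosDef)
    (lmax : ℝ) (hlmax : IsGreatest (Set.range hP.1.eigenvalues) lmax)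
    (θ₀ θim θex : EuclideanSpace ℝ (Fin K))
    (hstrict : StrictConcaveOn ℝ Set.univ
      (fun θ => f θ - (1/2) * ((θ - θ₀) ⬝ᵥ P.mulVec (θ - θ₀))))
    (hmax : ∀ θ : EuclideanSpace ℝ (Fin K),
      f θ - (1/2) * ((θ - θ₀) ⬝ᵥ P.mulVec (θ - θ₀)) ≤
        f θim - (1/2) * ((θim - θ₀) ⬝ᵥ P.mulVec (θim - θ₀)))
    (hex : θex = θ₀ +
      (show EuclideanSpace ℝ (Fin K) from WithLp.toLp 2 ((P⁻¹).mulVec (gradV f θ₀)))) :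
    (θim - θ₀) ⬝ᵥ P.mulVec (θim - θ₀) ≤
      (lmax / (lmax + α)) ^ 2 * ((θex - θ₀) ⬝ᵥ P.mulVec (θex - θ₀)) := by
  classical
  set u : EuclideanSpace ℝ (Fin K) := θim - θ₀ with hu
  set v : EuclideanSpace ℝ (Fin K) := θex - θ₀ with hv
  set Q : ℝ := (u : Fin K → ℝ) ⬝ᵥ P *ᵥ (u : Fin K → ℝ) with hQ
  set R : ℝ := (v : Fin K → ℝ) ⬝ᵥ P *ᵥ (v : Fin K → ℝ) with hR
  -- positivity facts
  have hlpos : 0 < lmax := by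
    obtain ⟨i, hi⟩ := hlmax.1
    exact hi ▸ hP.eigenvalues_pos i
  have hub : ∀ i, hP.1.eigenvalues i ≤ lmax := fun i => hlmax.2 ⟨i, rfl⟩
  have hQ0 : 0 ≤ Q := by
    have h := hP.posSemidef.dotProduct_mulVec_nonneg (u : Fin K → ℝ)
    rw [hQ]; simpa using h
  have hR0 : 0 ≤ R := by
    have h := hP.posSemidef.dotProduct_mulVec_nonneg (v : Fin K → ℝ)
    rw [hR]; simpa using h
  -- P v = grad f θ₀
  have hvdef : v = (show EuclideanSpace ℝ (Fin K) from WithLp.toLp 2 ((P⁻¹).mulVec (gradV f θ₀))) := by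
    rw [hv, hex]; abel
  have hPv : P *ᵥ (v : Fin K → ℝ) = gradV f θ₀ := by
    rw [hvdef]
    show P *ᵥ (P⁻¹ *ᵥ gradV f θ₀) = gradV f θ₀
    rw [Matrix.mulVec_mulVec, Matrix.mul_nonsing_inv _ (hP.isUnit.map detMonoidHom), Matrix.one_mulVec]
  -- the line through θ₀ in direction u
  have hline : ∀ t : ℝ, HasDerivAt (fun s : ℝ => θ₀ + s • u) u t := by
    intro t
    simpa using ((hasDerivAt_id t).smul_const u).const_add θ₀
  set D : ℝ → ℝ := fun t => fderiv ℝ f (θ₀ + t • u) u with hD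
  have hDd : ∀ t : ℝ, HasDerivAt (fun s : ℝ => f (θ₀ + s • u)) (D t) t := by
    intro t
    exact (hdiff (θ₀ + t • u)).hasFDerivAt.comp_hasDerivAt t (hline t)
  have hl1 : θ₀ + (1 : ℝ) • u = θim := by rw [one_smul, hu]; abel
  have hl0 : θ₀ + (0 : ℝ) • u = θ₀ := by rw [zero_smul, add_zero]
  -- quadratic along the line
  have hquad : ∀ t : ℝ, ((θ₀ + t • u - θ₀ : EuclideanSpace ℝ (Fin K)) : Fin K → ℝ) ⬝ᵥ
      P *ᵥ ((θ₀ + t • u - θ₀ : EuclideanSpace ℝ (Fin K)) : Fin K → ℝ) = t ^ 2 * Q := by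
    intro t
    have h1 : (θ₀ + t • u - θ₀ : EuclideanSpace ℝ (Fin K)) = t • u := by abel
    rw [h1, hQ]
    show (t • (u : Fin K → ℝ)) ⬝ᵥ P *ᵥ (t • (u : Fin K → ℝ)) = _
    rw [smul_dotProduct, Matrix.mulVec_smul, dotProduct_smul]
    simp [smul_eq_mul]; ring
  -- step A: first-order condition, D 1 = Q
  have hD1 : D 1 = Q := by
    set ψ : ℝ → ℝ := fun t => f (θ₀ + t • u) - 1/2 * (t ^ 2 * Q) with hψ
    have hψmax : IsLocalMax ψ 1 := by
      apply Filter.Eventually.of_forall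
      intro t
      have h := hmax (θ₀ + t • u)
      simp only [← WithLp.ofLp_sub] at h
      rw [hquad t] at h
      show f (θ₀ + t • u) - 1/2 * (t ^ 2 * Q) ≤ f (θ₀ + (1:ℝ) • u) - 1/2 * ((1:ℝ) ^ 2 * Q)
      rw [hl1]
      have hQ' : u.ofLp ⬝ᵥ P *ᵥ (θim - θ₀).ofLp = Q := rfl
      rw [hQ'] at h
      simpa using h
    have hψd : HasDerivAt ψ (D 1 - Q) 1 := by
      have h2 : HasDerivAt (fun t : ℝ => 1/2 * (t ^ 2 * Q)) Q 1 := by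
        have := ((hasDerivAt_pow 2 (1:ℝ)).mul_const Q).const_mul (1/2 : ℝ)
        refine this.congr_deriv ?_
        push_cast
        ring
      exact (hDd 1).sub h2
    have := hψmax.hasDerivAt_eq_zero hψd
    linarith
  -- step B: concavity ⇒ derivative monotone along the line
  have hkey : Q + α * ‖u‖ ^ 2 ≤ D 0 := by
    set b : ℝ := (inner ℝ θ₀ u : ℝ) with hb
    set n : ℝ := ‖u‖ ^ 2 with hn
    set χ : ℝ → ℝ := fun t => f (θ₀ + t • u) + α / 2 * (‖θ₀‖ ^ 2 + 2 * b * t + n * t ^ 2)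
      with hχ
    have hnorm : ∀ t : ℝ, ‖θ₀ + t • u‖ ^ 2 = ‖θ₀‖ ^ 2 + 2 * b * t + n * t ^ 2 := by
      intro t
      rw [norm_add_sq_real, real_inner_smul_right, norm_smul]
      simp [hb, hn, Real.norm_eq_abs, mul_pow, sq_abs]
      ring
    have hχconc : ConcaveOn ℝ Set.univ χ := by
      have := hconc.comp_affineMap (AffineMap.lineMap θ₀ θim : ℝ →ᵃ[ℝ] EuclideanSpace ℝ (Fin K))
      rw [Set.preimage_univ] at this
      suffices hχe : χ = ((fun θ => f θ + α / 2 * ‖θ‖ ^ 2) ∘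
          ⇑(AffineMap.lineMap θ₀ θim : ℝ →ᵃ[ℝ] EuclideanSpace ℝ (Fin K))) from hχe ▸ this
      funext t
      have hlm : (AffineMap.lineMap θ₀ θim : ℝ →ᵃ[ℝ] EuclideanSpace ℝ (Fin K)) t
          = θ₀ + t • u := by
        rw [AffineMap.lineMap_apply]
        simp [hu]; abel
      simp only [Function.comp_apply, hlm, hχ, hnorm t]
    have hχd : ∀ t : ℝ, HasDerivAt χ (D t + α / 2 * (2 * b + n * (2 * t))) t := by
      intro t
      have hpoly : HasDerivAt (fun t : ℝ => ‖θ₀‖ ^ 2 + 2 * b * t + n * t ^ 2)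
          (2 * b + n * (2 * t)) t := by
        have h1 : HasDerivAt (fun t : ℝ => ‖θ₀‖ ^ 2 + 2 * b * t) (2 * b) t := by
          simpa using ((hasDerivAt_id t).const_mul (2*b)).const_add (‖θ₀‖ ^ 2)
        have h2 : HasDerivAt (fun t : ℝ => n * t ^ 2) (n * (2 * t)) t := by
          simpa using (hasDerivAt_pow 2 t).const_mul n
        exact h1.add h2
      exact (hDd t).add (hpoly.const_mul (α/2))
    have hconv : ConvexOn ℝ Set.univ (fun t => -χ t) := hχconc.neg
    have hs1 := hconv.le_slope_of_hasDerivAt (Set.mem_univ (0:ℝ)) (Set.mem_univ (1:ℝ))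
      one_pos ((hχd 0).neg)
    have hs2 := hconv.slope_le_of_hasDerivAt (Set.mem_univ (0:ℝ)) (Set.mem_univ (1:ℝ))
      one_pos ((hχd 1).neg)
    have hmono : D 1 + α / 2 * (2 * b + n * 2) ≤ D 0 + α / 2 * (2 * b + n * 0) := by
      have h := hs1.trans hs2
      ring_nf at h ⊢
      linarith
    rw [hD1] at hmono
    ring_nf at hmono ⊢
    linarith
  -- step C: D 0 = u ⬝ᵥ P v
  have hD0 : D 0 = (u : Fin K → ℝ) ⬝ᵥ P *ᵥ (v : Fin K → ℝ) := by
    rw [hD]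
    simp only [hl0]
    rw [aux_fderiv_eq_grad f (hdiff θ₀) u, hPv, dotProduct_comm]
  -- assemble
  have hray : Q ≤ lmax * ‖u‖ ^ 2 := by
    have := aux_rayleigh hP hub (u : Fin K → ℝ)
    rwa [aux_dot_self u] at this
  set S : ℝ := (u : Fin K → ℝ) ⬝ᵥ P *ᵥ (v : Fin K → ℝ) with hS
  have h1 : Q + α * ‖u‖ ^ 2 ≤ S := by rw [← hD0]; exact hkey
  have h3 : S ^ 2 ≤ Q * R := aux_cs hP.posSemidef _ _
  have hSl : Q * (lmax + α) ≤ S * lmax := by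
    have e1 : α * Q ≤ α * (lmax * ‖u‖ ^ 2) := mul_le_mul_of_nonneg_left hray hα
    have e2 : (Q + α * ‖u‖ ^ 2) * lmax ≤ S * lmax :=
      mul_le_mul_of_nonneg_right h1 hlpos.le
    nlinarith
  have hgoal : Q * (lmax + α) ^ 2 ≤ lmax ^ 2 * R := by
    rcases hQ0.eq_or_lt with h | h
    · rw [← h, zero_mul]
      exact mul_nonneg (by positivity) hR0
    · have hsq : (Q * (lmax + α)) ^ 2 ≤ (S * lmax) ^ 2 := by
        apply pow_le_pow_left₀ (by positivity) hSl
      have e3 : S ^ 2 * lmax ^ 2 ≤ Q * R * lmax ^ 2 :=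
        mul_le_mul_of_nonneg_right h3 (sq_nonneg lmax)
      have e4 : Q * Q * (lmax + α) ^ 2 ≤ Q * R * lmax ^ 2 := by
        calc Q * Q * (lmax + α) ^ 2 = (Q * (lmax + α)) ^ 2 := by ring
          _ ≤ (S * lmax) ^ 2 := hsq
          _ = S ^ 2 * lmax ^ 2 := by ring
          _ ≤ Q * R * lmax ^ 2 := e3
      have e5 : Q * (Q * (lmax + α) ^ 2) ≤ Q * (lmax ^ 2 * R) := by
        have h1 : Q * (Q * (lmax + α) ^ 2) = Q * Q * (lmax + α) ^ 2 := by ring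
        have h2 : Q * (lmax ^ 2 * R) = Q * R * lmax ^ 2 := by ring
        rw [h1, h2]; exact e4
      exact le_of_mul_le_mul_left e5 h
  show Q ≤ (lmax / (lmax + α)) ^ 2 * R
  rw [div_pow, div_mul_eq_mul_div, le_div_iff₀ (by positivity)]
  exact hgoal
end
end

section
/- Let f : ℝ^K → ℝ be twice continuously differentiable with f(θ) + (α/2)‖θ‖² concave for some α ≥ 0, and let P be symmetric positive definite. For predictions θ₁, θ₂ ∈ ℝ^K, let θ₁', θ₂' be the respective maximizers of θ ↦ f(θ) − (1/2)(θ−θᵢ)ᵀP(θ−θᵢ), assumed to exist and be unique. Then (θ₁'−θ₂')ᵀP(θ₁'−θ₂') ≤ (λmax(P)/(λmax(P)+α))² · (θ₁−θ₂)ᵀP(θ₁−θ₂). -/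
open Matrix

noncomputable section

section Stmt2Aux

variable {K : ℕ}

private lemma bsymm {P : Matrix (Fin K) (Fin K) ℝ} (hs : Pᵀ = P) (x y : Fin K → ℝ) :
    x ⬝ᵥ P.mulVec y = y ⬝ᵥ P.mulVec x := by
  conv_lhs => rw [← hs, Matrix.mulVec_transpose]
  rw [dotProduct_comm, ← Matrix.dotProduct_mulVec]

private lemma bsubsub (P : Matrix (Fin K) (Fin K) ℝ) (x y z w : Fin K → ℝ) :
    (x - y) ⬝ᵥ P.mulVec (z - w) =
      x ⬝ᵥ P.mulVec z - x ⬝ᵥ P.mulVec w - y ⬝ᵥ P.mulVec z + y ⬝ᵥ P.mulVec w := by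
  simp [Matrix.mulVec_sub, dotProduct_sub, sub_dotProduct]
  ring

private lemma bcombo {P : Matrix (Fin K) (Fin K) ℝ} (hs : Pᵀ = P) (t : ℝ) (u w : Fin K → ℝ) :
    (t • u + (1 - t) • w) ⬝ᵥ P.mulVec (t • u + (1 - t) • w) =
      t^2 * (u ⬝ᵥ P.mulVec u) + 2*t*(1-t) * (u ⬝ᵥ P.mulVec w)
        + (1-t)^2 * (w ⬝ᵥ P.mulVec w) := by
  simp only [Matrix.mulVec_add, Matrix.mulVec_smul, dotProduct_add, add_dotProduct,
    dotProduct_smul, smul_dotProduct, smul_eq_mul]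
  rw [bsymm hs w u]
  ring

private lemma dcombo (t : ℝ) (u w : Fin K → ℝ) :
    (t • u + (1 - t) • w) ⬝ᵥ (t • u + (1 - t) • w) =
      t^2 * (u ⬝ᵥ u) + 2*t*(1-t) * (u ⬝ᵥ w) + (1-t)^2 * (w ⬝ᵥ w) := by
  simp only [dotProduct_add, add_dotProduct, dotProduct_smul, smul_dotProduct, smul_eq_mul]
  rw [dotProduct_comm w u]
  ring

private lemma dsubsub (x y : Fin K → ℝ) :
    (x - y) ⬝ᵥ (x - y) = x ⬝ᵥ x - 2 * (x ⬝ᵥ y) + y ⬝ᵥ y := by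
  simp only [dotProduct_sub, sub_dotProduct]
  rw [dotProduct_comm y x]
  ring

private lemma quad_le_lmax {P : Matrix (Fin K) (Fin K) ℝ} (hP : P.PosDef) {lmax : ℝ}
    (hl : ∀ i, hP.1.eigenvalues i ≤ lmax) (v : Fin K → ℝ) :
    v ⬝ᵥ P.mulVec v ≤ lmax * (v ⬝ᵥ v) := by
  classical
  set U : Matrix (Fin K) (Fin K) ℝ := (hP.1.eigenvectorUnitary : Matrix (Fin K) (Fin K) ℝ) with hU
  set w : Fin K → ℝ := Uᵀ *ᵥ v with hw
  have hstar : (star U : Matrix (Fin K) (Fin K) ℝ) = Uᵀ := by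
    rw [star_eq_conjTranspose, conjTranspose_eq_transpose_of_trivial]
  have hUU : U * Uᵀ = 1 := by
    rw [← hstar]; exact (Matrix.mem_unitaryGroup_iff.mp hP.1.eigenvectorUnitary.2)
  have hdot : ∀ (y : Fin K → ℝ), v ⬝ᵥ U *ᵥ y = w ⬝ᵥ y := by
    intro y
    rw [dotProduct_mulVec, hw]
    congr 1
    rw [← Matrix.vecMul_transpose, Matrix.transpose_transpose]
  have hdiag : diagonal (RCLike.ofReal ∘ hP.1.eigenvalues) = diagonal hP.1.eigenvalues := by
    congr 1
  have h1 : v ⬝ᵥ P.mulVec v = w ⬝ᵥ (diagonal hP.1.eigenvalues) *ᵥ w := by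
    conv_lhs => rw [hP.1.spectral_theorem]
    rw [Unitary.conjStarAlgAut_apply, hstar, ← hU, hdiag, Matrix.mul_assoc, ← Matrix.mulVec_mulVec, hdot,
      ← Matrix.mulVec_mulVec, ← hw]
  have h2 : w ⬝ᵥ (diagonal hP.1.eigenvalues) *ᵥ w ≤ lmax * (w ⬝ᵥ w) := by
    rw [dotProduct, dotProduct, Finset.mul_sum]
    apply Finset.sum_le_sum
    intro i _
    rw [mulVec_diagonal]
    have h0 : 0 ≤ w i * w i := mul_self_nonneg _
    calc w i * (hP.1.eigenvalues i * w i) = hP.1.eigenvalues i * (w i * w i) := by ring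
      _ ≤ lmax * (w i * w i) := mul_le_mul_of_nonneg_right (hl i) h0
  have h3 : w ⬝ᵥ w = v ⬝ᵥ v := by
    rw [hw]
    nth_rewrite 1 [Matrix.mulVec_transpose]
    rw [← Matrix.dotProduct_mulVec, Matrix.mulVec_mulVec, hUU, Matrix.one_mulVec]
  rw [h1]; rw [h3] at h2; exact h2

end Stmt2Aux

set_option maxHeartbeats 1000000 in
theorem stmt2 {K : ℕ} (f : EuclideanSpace ℝ (Fin K) → ℝ)
    (hf : ContDiff ℝ 2 f) (α : ℝ) (hα : 0 ≤ α)
    (hconc : ConcaveOn ℝ Set.univ (fun θ => f θ + α / 2 * ‖θ‖ ^ 2))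
    (P : Matrix (Fin K) (Fin K) ℝ) (hP : P.PosDef)
    (lmax : ℝ) (hlmax : IsGreatest (Set.range hP.1.eigenvalues) lmax)
    (θ₁ θ₂ θ₁' θ₂' : EuclideanSpace ℝ (Fin K))
    (hmax₁ : ∀ θ : EuclideanSpace ℝ (Fin K),
      f θ - (1/2) * ((θ - θ₁) ⬝ᵥ P.mulVec (θ - θ₁)) ≤
        f θ₁' - (1/2) * ((θ₁' - θ₁) ⬝ᵥ P.mulVec (θ₁' - θ₁)))
    (huniq₁ : ∀ θ : EuclideanSpace ℝ (Fin K),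
      (∀ θ' : EuclideanSpace ℝ (Fin K),
        f θ' - (1/2) * ((θ' - θ₁) ⬝ᵥ P.mulVec (θ' - θ₁)) ≤
          f θ - (1/2) * ((θ - θ₁) ⬝ᵥ P.mulVec (θ - θ₁))) → θ = θ₁')
    (hmax₂ : ∀ θ : EuclideanSpace ℝ (Fin K),
      f θ - (1/2) * ((θ - θ₂) ⬝ᵥ P.mulVec (θ - θ₂)) ≤
        f θ₂' - (1/2) * ((θ₂' - θ₂) ⬝ᵥ P.mulVec (θ₂' - θ₂)))
    (huniq₂ : ∀ θ : EuclideanSpace ℝ (Fin K),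
      (∀ θ' : EuclideanSpace ℝ (Fin K),
        f θ' - (1/2) * ((θ' - θ₂) ⬝ᵥ P.mulVec (θ' - θ₂)) ≤
          f θ - (1/2) * ((θ - θ₂) ⬝ᵥ P.mulVec (θ - θ₂))) → θ = θ₂') :
    (θ₁' - θ₂') ⬝ᵥ P.mulVec (θ₁' - θ₂') ≤
      (lmax / (lmax + α)) ^ 2 * ((θ₁ - θ₂) ⬝ᵥ P.mulVec (θ₁ - θ₂)) := by
  classical
  have hPs : Pᵀ = P := by
    rw [← conjTranspose_eq_transpose_of_trivial]; exact hP.1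
  have hB0 : ∀ v : Fin K → ℝ, 0 ≤ v ⬝ᵥ P.mulVec v := by
    intro v; simpa using hP.posSemidef.dotProduct_mulVec_nonneg v
  have hnorm : ∀ θ : EuclideanSpace ℝ (Fin K), ‖θ‖^2 = θ ⬝ᵥ θ := by
    intro θ
    rw [EuclideanSpace.norm_sq_eq]
    simp [dotProduct, sq]
  have hd0 : ∀ v : Fin K → ℝ, 0 ≤ v ⬝ᵥ v := by
    intro v
    exact Finset.sum_nonneg fun i _ => mul_self_nonneg _
  -- the key strong-maximality inequality
  have key : ∀ (c m : EuclideanSpace ℝ (Fin K)),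
      (∀ θ : EuclideanSpace ℝ (Fin K),
        f θ - (1/2) * ((θ - c) ⬝ᵥ P.mulVec (θ - c)) ≤
          f m - (1/2) * ((m - c) ⬝ᵥ P.mulVec (m - c))) →
      ∀ x : EuclideanSpace ℝ (Fin K),
        f x - (1/2) * ((x - c) ⬝ᵥ P.mulVec (x - c))
          + (1/2) * ((x - m) ⬝ᵥ P.mulVec (x - m) + α * ((x - m) ⬝ᵥ (x - m)))
          ≤ f m - (1/2) * ((m - c) ⬝ᵥ P.mulVec (m - c)) := by
    intro c m hm x
    set Mq : ℝ := (x - m) ⬝ᵥ P.mulVec (x - m) + α * ((x - m) ⬝ᵥ (x - m)) with hMq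
    have hMq0 : 0 ≤ Mq := add_nonneg (hB0 _) (mul_nonneg hα (hd0 _))
    have hstep : ∀ t : ℝ, 0 < t → t ≤ 1 →
        f x - (1/2) * ((x - c) ⬝ᵥ P.mulVec (x - c)) + (1 - t) * ((1/2) * Mq)
          ≤ f m - (1/2) * ((m - c) ⬝ᵥ P.mulVec (m - c)) := by
      intro t ht ht1
      set z : EuclideanSpace ℝ (Fin K) := t • x + (1 - t) • m with hz
      have hg := hconc.2 (Set.mem_univ x) (Set.mem_univ m) (ht.le : (0:ℝ) ≤ t)
        (show (0:ℝ) ≤ 1 - t by linarith) (show t + (1 - t) = 1 by ring)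
      simp only [smul_eq_mul] at hg
      rw [← hz] at hg
      have hmz := hm z
      have hzc : z - c = t • (x - c) + (1 - t) • (m - c) := by
        rw [hz]; module
      have hxm : x - m = (x - c) - (m - c) := by module
      have hA : z ⬝ᵥ z = t^2 * (x ⬝ᵥ x) + 2*t*(1-t) * (x ⬝ᵥ m) + (1-t)^2 * (m ⬝ᵥ m) :=
        dcombo t x m
      have hB : (z - c) ⬝ᵥ P.mulVec (z - c) =
          t^2 * ((x - c) ⬝ᵥ P.mulVec (x - c)) + 2*t*(1-t) * ((x - c) ⬝ᵥ P.mulVec (m - c))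
            + (1-t)^2 * ((m - c) ⬝ᵥ P.mulVec (m - c)) := by
        rw [← WithLp.ofLp_sub (x := z) (y := c), hzc]; exact bcombo hPs t (x - c) (m - c)
      have hC : (x - m) ⬝ᵥ P.mulVec (x - m) =
          (x - c) ⬝ᵥ P.mulVec (x - c) - 2 * ((x - c) ⬝ᵥ P.mulVec (m - c))
            + (m - c) ⬝ᵥ P.mulVec (m - c) := by
        rw [← WithLp.ofLp_sub (x := x) (y := m), hxm, WithLp.ofLp_sub (x := x - c) (y := m - c), bsubsub, bsymm hPs (m - c).ofLp (x - c).ofLp]; simp only [WithLp.ofLp_sub]; ring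
      have hCn : (x - m) ⬝ᵥ (x - m) = x ⬝ᵥ x - 2 * (x ⬝ᵥ m) + m ⬝ᵥ m := by
        have hxm2 : (x - m : EuclideanSpace ℝ (Fin K)) ⬝ᵥ (x - m) =
            ((x : Fin K → ℝ) - (m : Fin K → ℝ)) ⬝ᵥ ((x : Fin K → ℝ) - (m : Fin K → ℝ)) := rfl
        rw [hxm2, dsubsub]
      have hnx := hnorm x
      have hnm := hnorm m
      have hnz := hnorm z
      -- hg : t * (f x + α/2 * ‖x‖^2) + (1-t) * (f m + α/2 * ‖m‖^2) ≤ f z + α/2 * ‖z‖^2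
      rw [hnx, hnm, hnz] at hg
      -- hmz : f z - 1/2 * B(z-c,z-c) ≤ f m - 1/2 * B(m-c,m-c)
      have H : t * (f x - (1/2) * ((x - c) ⬝ᵥ P.mulVec (x - c)) + (1 - t) * ((1/2) * Mq))
          ≤ t * (f m - (1/2) * ((m - c) ⬝ᵥ P.mulVec (m - c))) := by
        rw [hMq, hC, hCn]
        rw [hB] at hmz
        rw [hA] at hg
        nlinarith [hg, hmz]
      exact le_of_mul_le_mul_left (by linarith [H]) ht
    refine le_of_forall_pos_le_add ?_
    intro ε hε
    set t : ℝ := min 1 (ε / ((1/2) * Mq + 1)) with htdef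
    have hden : (0:ℝ) < (1/2) * Mq + 1 := by linarith
    have ht0 : 0 < t := lt_min one_pos (div_pos hε hden)
    have ht1 : t ≤ 1 := min_le_left _ _
    have h1 := hstep t ht0 ht1
    have h2 : t * ((1/2) * Mq) ≤ ε := by
      have htle : t ≤ ε / ((1/2) * Mq + 1) := min_le_right _ _
      have : t * ((1/2) * Mq) ≤ (ε / ((1/2) * Mq + 1)) * ((1/2) * Mq + 1) := by
        apply mul_le_mul htle (by linarith) (by positivity) (le_of_lt (div_pos hε hden))
      rwa [div_mul_cancel₀ ε (ne_of_gt hden)] at this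
    nlinarith [h1, h2]
  -- apply the key inequality twice and sum
  have k1 := key θ₁ θ₁' hmax₁ θ₂'
  have k2 := key θ₂ θ₂' hmax₂ θ₁'
  -- abbreviations
  set d : EuclideanSpace ℝ (Fin K) := θ₁' - θ₂' with hd
  set e : EuclideanSpace ℝ (Fin K) := θ₁ - θ₂ with he
  have hsymmd : (θ₂' - θ₁') ⬝ᵥ P.mulVec (θ₂' - θ₁') = d ⬝ᵥ P.mulVec d := by
    rw [WithLp.ofLp_sub, bsubsub, hd, WithLp.ofLp_sub, bsubsub, bsymm hPs (θ₂' : Fin K → ℝ) (θ₁')]; ring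
  have hsymmdn : (θ₂' - θ₁') ⬝ᵥ (θ₂' - θ₁') = d ⬝ᵥ (d : Fin K → ℝ) := by
    have e1 : (θ₂' - θ₁' : EuclideanSpace ℝ (Fin K)) ⬝ᵥ (θ₂' - θ₁') =
        ((θ₂' : Fin K → ℝ) - (θ₁' : Fin K → ℝ)) ⬝ᵥ ((θ₂' : Fin K → ℝ) - (θ₁' : Fin K → ℝ)) := rfl
    have e2 : (d : Fin K → ℝ) ⬝ᵥ d =
        ((θ₁' : Fin K → ℝ) - (θ₂' : Fin K → ℝ)) ⬝ᵥ ((θ₁' : Fin K → ℝ) - (θ₂' : Fin K → ℝ)) := rfl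
    rw [e1, e2, dsubsub, dsubsub, dotProduct_comm (θ₂' : Fin K → ℝ) θ₁']; ring
  -- the quadratic-term identity
  have hiden : (1/2) * ((θ₂' - θ₁) ⬝ᵥ P.mulVec (θ₂' - θ₁))
      + (1/2) * ((θ₁' - θ₂) ⬝ᵥ P.mulVec (θ₁' - θ₂))
      - (1/2) * ((θ₁' - θ₁) ⬝ᵥ P.mulVec (θ₁' - θ₁))
      - (1/2) * ((θ₂' - θ₂) ⬝ᵥ P.mulVec (θ₂' - θ₂))
      = d ⬝ᵥ P.mulVec e := by
    have hde : (d : Fin K → ℝ) ⬝ᵥ P.mulVec e =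
        ((θ₁' : Fin K → ℝ) - (θ₂' : Fin K → ℝ)) ⬝ᵥ P.mulVec ((θ₁ : Fin K → ℝ) - (θ₂ : Fin K → ℝ)) := rfl
    rw [hde]; simp only [WithLp.ofLp_sub]; rw [bsubsub, bsubsub, bsubsub, bsubsub, bsubsub,
      bsymm hPs (θ₂' : Fin K → ℝ) θ₁, bsymm hPs (θ₁' : Fin K → ℝ) θ₂,
      bsymm hPs (θ₁' : Fin K → ℝ) θ₁, bsymm hPs (θ₂' : Fin K → ℝ) θ₂]
    ring
  -- main inequality : B d d + α * (d ⬝ᵥ d) ≤ B d e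
  have hmain : d ⬝ᵥ P.mulVec d + α * ((d : Fin K → ℝ) ⬝ᵥ d) ≤ d ⬝ᵥ P.mulVec e := by
    rw [hsymmd, hsymmdn] at k1
    rw [show (θ₁' : Fin K → ℝ) - (θ₂' : Fin K → ℝ) = (d : Fin K → ℝ) from rfl] at k2
    linarith [k1, k2, hiden]
  -- Cauchy-Schwarz via discriminant
  have hCS : (d ⬝ᵥ P.mulVec e)^2 ≤ (d ⬝ᵥ P.mulVec d) * (e ⬝ᵥ P.mulVec e) := by
    have hq : ∀ s : ℝ, 0 ≤ (e ⬝ᵥ P.mulVec e) * (s * s) + (-(2 * (d ⬝ᵥ P.mulVec e))) * s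
        + (d ⬝ᵥ P.mulVec d) := by
      intro s
      have h := hB0 ((d : Fin K → ℝ) - s • (e : Fin K → ℝ))
      rw [bsubsub] at h
      have e1 : (d : Fin K → ℝ) ⬝ᵥ P.mulVec (s • (e : Fin K → ℝ)) = s * (d ⬝ᵥ P.mulVec e) := by
        rw [Matrix.mulVec_smul, dotProduct_smul, smul_eq_mul]
      have e2 : (s • (e : Fin K → ℝ)) ⬝ᵥ P.mulVec d = s * (d ⬝ᵥ P.mulVec e) := by
        rw [smul_dotProduct, smul_eq_mul, bsymm hPs (e : Fin K → ℝ) d]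
      have e3 : (s • (e : Fin K → ℝ)) ⬝ᵥ P.mulVec (s • (e : Fin K → ℝ))
          = s * s * (e ⬝ᵥ P.mulVec e) := by
        rw [smul_dotProduct, Matrix.mulVec_smul, dotProduct_smul, smul_eq_mul, smul_eq_mul]
        ring
      rw [e1, e2, e3] at h
      nlinarith [h]
    have hdisc := discrim_le_zero hq
    rw [discrim] at hdisc
    nlinarith [hdisc]
  -- eigenvalue bound
  obtain ⟨i, hi⟩ := hlmax.1
  have hlpos : 0 < lmax := hi ▸ hP.eigenvalues_pos i
  have hlub : ∀ j, hP.1.eigenvalues j ≤ lmax := fun j => hlmax.2 ⟨j, rfl⟩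
  have hspec : d ⬝ᵥ P.mulVec d ≤ lmax * ((d : Fin K → ℝ) ⬝ᵥ d) := quad_le_lmax hP hlub d
  -- final arithmetic
  set X : ℝ := d ⬝ᵥ P.mulVec d with hX
  set N : ℝ := (d : Fin K → ℝ) ⬝ᵥ d with hN
  set Y : ℝ := e ⬝ᵥ P.mulVec e with hY
  set ip : ℝ := d ⬝ᵥ P.mulVec e with hip
  have hX0 : 0 ≤ X := hB0 d
  have hY0 : 0 ≤ Y := hB0 e
  have hN0 : 0 ≤ N := hd0 d
  have hsum : (lmax + α) * X ≤ lmax * ip := by nlinarith [hmain, hspec]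
  have hla : 0 < lmax + α := by linarith
  show X ≤ (lmax / (lmax + α))^2 * Y
  rcases eq_or_lt_of_le hX0 with hX0' | hXpos
  · rw [← hX0']
    positivity
  · have hippos : 0 < lmax * ip := lt_of_lt_of_le (by positivity) hsum
    have hsq : ((lmax + α) * X)^2 ≤ (lmax * ip)^2 := by
      apply sq_le_sq' <;> nlinarith [hsum, hXpos, hla]
    have h5 : (lmax + α)^2 * X^2 ≤ lmax^2 * (X * Y) := by
      have h4 := mul_le_mul_of_nonneg_left hCS (sq_nonneg lmax)
      nlinarith [hsq, h4]
    have h6 : (lmax + α)^2 * X ≤ lmax^2 * Y := by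
      have := mul_le_mul_of_nonneg_right h5 (le_of_lt (inv_pos.mpr hXpos))
      calc (lmax + α)^2 * X = (lmax + α)^2 * X^2 * X⁻¹ := by
            field_simp
          _ ≤ lmax^2 * (X * Y) * X⁻¹ := this
          _ = lmax^2 * Y := by field_simp
    rw [div_pow]
    rw [div_mul_eq_mul_div, le_div_iff₀ (by positivity)]
    nlinarith [h6]
end
end

section
/- Let f : ℝ^K → ℝ be twice continuously differentiable with gradient ∇f that is L-Lipschitz, and suppose f(θ) + (α/2)‖θ‖² is concave for some α ≥ 0. Let P be symmetric positive definite with λmin(P) ≥ L/2. For θ₁, θ₂ ∈ ℝ^K define the explicit updates θᵢ' = θᵢ + P⁻¹∇f(θᵢ). Then (θ₁'−θ₂')ᵀP(θ₁'−θ₂') ≤ [(λmax(P) − α(2 − L/λmin(P)))/λmax(P)] · (θ₁−θ₂)ᵀP(θ₁−θ₂), and the coefficient (λmax(P) − α(2 − L/λmin(P)))/λmax(P) lies in [0,1]. -/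
open Matrix
set_option maxHeartbeats 1600000

noncomputable section

lemma dot_eq_inner {K : ℕ} (x y : EuclideanSpace ℝ (Fin K)) :
    (x : Fin K → ℝ) ⬝ᵥ (y : Fin K → ℝ) = (inner ℝ x y : ℝ) := by
  simp [dotProduct, PiLp.inner_apply, RCLike.inner_apply, mul_comm]

lemma quad_eq_sum {K : ℕ} (A : Matrix (Fin K) (Fin K) ℝ) (hA : A.IsHermitian)
    (x : EuclideanSpace ℝ (Fin K)) :
    (x : Fin K → ℝ) ⬝ᵥ A *ᵥ (x : Fin K → ℝ) = ∑ j, hA.eigenvalues j *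
      ((inner ℝ x (hA.eigenvectorBasis j) : ℝ))^2 := by
  have h1 : (x : Fin K → ℝ) ⬝ᵥ A *ᵥ (x : Fin K → ℝ)
      = (inner ℝ x (show EuclideanSpace ℝ (Fin K) from WithLp.toLp 2 (A *ᵥ x)) : ℝ) := dot_eq_inner x (WithLp.toLp 2 (A *ᵥ x))
  rw [h1, ← OrthonormalBasis.sum_inner_mul_inner hA.eigenvectorBasis]
  refine Finset.sum_congr rfl fun j _ => ?_
  have h2 : (inner ℝ (hA.eigenvectorBasis j) (show EuclideanSpace ℝ (Fin K) from WithLp.toLp 2 (A *ᵥ x)) : ℝ)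
      = hA.eigenvalues j * (inner ℝ (hA.eigenvectorBasis j) x : ℝ) := by
    have hsym : (hA.eigenvectorBasis j : Fin K → ℝ) ⬝ᵥ (A *ᵥ (x : Fin K → ℝ))
        = (A *ᵥ (hA.eigenvectorBasis j : Fin K → ℝ)) ⬝ᵥ (x : Fin K → ℝ) := by
      rw [dotProduct_mulVec, ← mulVec_transpose, ← A.conjTranspose_eq_transpose_of_trivial, hA.eq]
    have h3 := congrArg (fun v => v ⬝ᵥ (x : Fin K → ℝ)) (hA.mulVec_eigenvectorBasis j)
    simp only [smul_dotProduct] at h3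
    rw [← dot_eq_inner, hsym]
    exact h3.trans (by rw [smul_eq_mul, dot_eq_inner])
  rw [h2, real_inner_comm x]
  ring

lemma normsq_eq_sum {K : ℕ} (A : Matrix (Fin K) (Fin K) ℝ) (hA : A.IsHermitian)
    (x : EuclideanSpace ℝ (Fin K)) :
    (x : Fin K → ℝ) ⬝ᵥ (x : Fin K → ℝ)
      = ∑ j, ((inner ℝ x (hA.eigenvectorBasis j) : ℝ))^2 := by
  rw [dot_eq_inner, ← OrthonormalBasis.sum_inner_mul_inner hA.eigenvectorBasis]
  refine Finset.sum_congr rfl fun j _ => ?_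
  rw [real_inner_comm (hA.eigenvectorBasis j)]; ring

lemma quad_le {K : ℕ} (A : Matrix (Fin K) (Fin K) ℝ) (hA : A.IsHermitian)
    (x : EuclideanSpace ℝ (Fin K)) (c : ℝ) (h : ∀ j, hA.eigenvalues j ≤ c) :
    (x : Fin K → ℝ) ⬝ᵥ A *ᵥ (x : Fin K → ℝ) ≤ c * ((x : Fin K → ℝ) ⬝ᵥ (x : Fin K → ℝ)) := by
  rw [quad_eq_sum A hA x, normsq_eq_sum A hA x, Finset.mul_sum]
  exact Finset.sum_le_sum fun j _ => mul_le_mul_of_nonneg_right (h j) (sq_nonneg _)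

lemma le_quad {K : ℕ} (A : Matrix (Fin K) (Fin K) ℝ) (hA : A.IsHermitian)
    (x : EuclideanSpace ℝ (Fin K)) (c : ℝ) (h : ∀ j, c ≤ hA.eigenvalues j) :
    c * ((x : Fin K → ℝ) ⬝ᵥ (x : Fin K → ℝ)) ≤ (x : Fin K → ℝ) ⬝ᵥ A *ᵥ (x : Fin K → ℝ) := by
  rw [quad_eq_sum A hA x, normsq_eq_sum A hA x, Finset.mul_sum]
  exact Finset.sum_le_sum fun j _ => mul_le_mul_of_nonneg_right (h j) (sq_nonneg _)


variable {K : ℕ}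
local notation "E" => EuclideanSpace ℝ (Fin K)

/-- directional derivative along a line, in terms of the gradient -/
lemma hasDerivAt_line (f : E → ℝ) (hdf : Differentiable ℝ f) (y d : E) (t : ℝ) :
    HasDerivAt (fun s : ℝ => f (y + s • d)) (inner ℝ (gradient f (y + t • d)) d : ℝ) t := by
  have hg : HasGradientAt f (gradient f (y + t • d)) (y + t • d) :=
    (hdf (y + t • d)).hasGradientAt
  rw [hasGradientAt_iff_hasFDerivAt] at hg
  have hline : HasDerivAt (fun s : ℝ => y + s • d) d t := by
    simpa using ((hasDerivAt_id t).smul_const d).const_add y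
  have := hg.comp_hasDerivAt t hline
  simpa [InnerProductSpace.toDual_apply_apply, Function.comp_def] using this

/-- gradient monotonicity for concave functions -/
lemma grad_mono (f : E → ℝ) (hdf : Differentiable ℝ f)
    (hconc : ConcaveOn ℝ Set.univ f) (x y : E) :
    (inner ℝ (gradient f x - gradient f y) (x - y) : ℝ) ≤ 0 := by
  set d : E := x - y with hd
  have hphi : ConcaveOn ℝ Set.univ (fun t : ℝ => f (y + t • d)) := by
    have := hconc.comp_affineMap (AffineMap.lineMap y x : ℝ →ᵃ[ℝ] E)
    simp only [Set.preimage_univ] at this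
    have heq : (fun t : ℝ => f (y + t • d)) = f ∘ ⇑(AffineMap.lineMap y x) := by
      funext t
      show f _ = f _
      congr 1
      simp only [AffineMap.lineMap_apply, vsub_eq_sub, vadd_eq_add, hd]
      module
    rw [heq]
    exact this
  have hder : ∀ t : ℝ, HasDerivAt (fun s : ℝ => f (y + s • d))
      (inner ℝ (gradient f (y + t • d)) d : ℝ) t := hasDerivAt_line f hdf y d
  have hanti := hphi.antitoneOn_deriv (fun t _ => (hder t).differentiableAt)
  have h01 := hanti (Set.mem_univ 0) (Set.mem_univ 1) zero_le_one
  rw [(hder 0).deriv, (hder 1).deriv] at h01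
  have h0 : y + (0:ℝ) • d = y := by simp
  have h1 : y + (1:ℝ) • d = x := by simp [hd]
  rw [h0, h1] at h01
  have := sub_nonpos.mpr h01
  rwa [← inner_sub_left] at this

/-- first-order condition for concave functions -/
lemma concave_tangent (f : E → ℝ) (hdf : Differentiable ℝ f)
    (hconc : ConcaveOn ℝ Set.univ f) (y z : E) :
    f z ≤ f y + (inner ℝ (gradient f y) (z - y) : ℝ) := by
  set d : E := z - y with hd
  have hphi : ConcaveOn ℝ Set.univ (fun t : ℝ => f (y + t • d)) := by
    have := hconc.comp_affineMap (AffineMap.lineMap y z : ℝ →ᵃ[ℝ] E)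
    simp only [Set.preimage_univ] at this
    have heq : (fun t : ℝ => f (y + t • d)) = f ∘ ⇑(AffineMap.lineMap y z) := by
      funext t
      show f _ = f _
      congr 1
      simp only [AffineMap.lineMap_apply, vsub_eq_sub, vadd_eq_add, hd]
      module
    rw [heq]
    exact this
  have hder := hasDerivAt_line f hdf y d 0
  have hslope := hphi.slope_le_of_hasDerivAt (Set.mem_univ 0) (Set.mem_univ 1)
    zero_lt_one hder
  rw [slope_def_field] at hslope
  simp only [zero_smul, add_zero, one_smul] at hslope hder
  have h1 : y + d = z := by simp [hd]
  rw [h1] at hslope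
  have : f z - f y ≤ (inner ℝ (gradient f y) d : ℝ) := by
    have := hslope
    simp [div_one] at this
    linarith [this]
  linarith [this]

/-- descent lemma: lower bound for f from Lipschitz gradient -/
lemma descent_lemma (f : E → ℝ) (hdf : Differentiable ℝ f) (L : ℝ) (hL : 0 ≤ L)
    (hLip : LipschitzWith (Real.toNNReal L) (fun θ => gradient f θ)) (y z : E) :
    f y + (inner ℝ (gradient f y) (z - y) : ℝ) - L / 2 * ‖z - y‖ ^ 2 ≤ f z := by
  set d : E := z - y with hd
  set c : ℝ := (inner ℝ (gradient f y) d : ℝ) with hc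
  set ψ : ℝ → ℝ := fun t => f (y + t • d) - t * c + L * ‖d‖ ^ 2 / 2 * t ^ 2 with hψdef
  have hψ : ∀ t : ℝ, HasDerivAt ψ
      ((inner ℝ (gradient f (y + t • d)) d : ℝ) - c + L * ‖d‖ ^ 2 / 2 * (2 * t)) t := by
    intro t
    have h1 := hasDerivAt_line f hdf y d t
    have h2 : HasDerivAt (fun s : ℝ => s * c) c t := by
      simpa using (hasDerivAt_id t).mul_const c
    have h3 : HasDerivAt (fun s : ℝ => L * ‖d‖ ^ 2 / 2 * s ^ 2)
        (L * ‖d‖ ^ 2 / 2 * (2 * t)) t := by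
      have := (hasDerivAt_pow 2 t).const_mul (L * ‖d‖ ^ 2 / 2)
      simpa [mul_comm, mul_assoc, mul_left_comm] using this
    exact (h1.sub h2).add h3
  have hmono : MonotoneOn ψ (Set.Icc (0:ℝ) 1) := by
    apply monotoneOn_of_deriv_nonneg (convex_Icc 0 1)
    · refine Continuous.continuousOn ?_
      have h1 : Continuous fun s : ℝ => y + s • d :=
        continuous_const.add (continuous_id.smul continuous_const)
      exact ((hdf.continuous.comp h1).sub (continuous_id.mul continuous_const)).add
        (continuous_const.mul (continuous_pow 2))
    · intro t ht
      exact ((hψ t).differentiableAt).differentiableWithinAt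
    · intro t ht
      rw [interior_Icc] at ht
      rw [(hψ t).deriv]
      have hlip' : ‖gradient f (y + t • d) - gradient f y‖ ≤ L * (t * ‖d‖) := by
        have h := hLip.dist_le_mul (y + t • d) y
        rw [dist_eq_norm, dist_eq_norm] at h
        have he : (y + t • d) - y = t • d := by abel
        rw [he, norm_smul] at h
        rw [Real.norm_eq_abs, abs_of_pos ht.1] at h
        simpa [Real.coe_toNNReal L hL, mul_assoc] using h
      have hinner : -(L * (t * ‖d‖) * ‖d‖) ≤
          (inner ℝ (gradient f (y + t • d)) d : ℝ) - c := by
        rw [hc, ← inner_sub_left]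
        have h1 := abs_real_inner_le_norm (gradient f (y + t • d) - gradient f y) d
        have h2 := neg_abs_le (inner ℝ (gradient f (y + t • d) - gradient f y) d : ℝ)
        nlinarith [norm_nonneg d, mul_le_mul_of_nonneg_right hlip' (norm_nonneg d)]
      nlinarith [hinner]
  have h01 := hmono (Set.mem_Icc.mpr ⟨le_refl 0, zero_le_one⟩)
    (Set.mem_Icc.mpr ⟨zero_le_one, le_refl 1⟩) zero_le_one
  have e0 : ψ 0 = f y := by simp [hψdef]
  have e1 : ψ 1 = f z - c + L * ‖d‖ ^ 2 / 2 := by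
    have hz : y + (1:ℝ) • d = z := by rw [hd]; module
    simp only [hψdef, one_smul, one_pow, mul_one, one_mul]
    rw [show y + d = z by rw [hd]; abel]
  rw [e0, e1] at h01
  rw [hc] at h01
  linarith [h01]

lemma convexOn_normSq : ConvexOn ℝ Set.univ (fun θ : EuclideanSpace ℝ (Fin K) => ‖θ‖ ^ 2) := by
  refine ⟨convex_univ, fun x _ y _ a b ha hb hab => ?_⟩
  have hexp : ‖a • x + b • y‖ ^ 2
      = a ^ 2 * ‖x‖ ^ 2 + 2 * (a * b) * (inner ℝ x y : ℝ) + b ^ 2 * ‖y‖ ^ 2 := by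
    rw [norm_add_sq_real, norm_smul, norm_smul, real_inner_smul_left, real_inner_smul_right]
    rw [Real.norm_eq_abs, Real.norm_eq_abs, abs_of_nonneg ha, abs_of_nonneg hb]
    ring
  have hns := norm_sub_sq_real x y
  simp only [smul_eq_mul]
  nlinarith [sq_nonneg (‖x - y‖), mul_nonneg ha hb, sq_nonneg (‖x‖ - ‖y‖)]

/-- cocoercivity (Baillon–Haddad) for concave functions with Lipschitz gradient -/
lemma cocoercive (f : EuclideanSpace ℝ (Fin K) → ℝ) (hdf : Differentiable ℝ f)
    (hconcf : ConcaveOn ℝ Set.univ f) (L : ℝ) (hL : 0 < L)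
    (hLip : LipschitzWith (Real.toNNReal L) (fun θ => gradient f θ))
    (x y : EuclideanSpace ℝ (Fin K)) :
    ‖gradient f x - gradient f y‖ ^ 2
      ≤ L * (inner ℝ (gradient f y - gradient f x) (x - y) : ℝ) := by
  have key : ∀ x y : EuclideanSpace ℝ (Fin K),
      f y + ‖gradient f x - gradient f y‖ ^ 2 / (2 * L)
        ≤ f x + (inner ℝ (gradient f x) (y - x) : ℝ) := by
    intro x y
    set u : EuclideanSpace ℝ (Fin K) := gradient f y - gradient f x with hu
    set z : EuclideanSpace ℝ (Fin K) := y + (1 / L) • u with hz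
    have step1 : f z ≤ f x + (inner ℝ (gradient f x) (z - x) : ℝ) :=
      concave_tangent f hdf hconcf x z
    have step2 : f y + (inner ℝ (gradient f y) (z - y) : ℝ) - L / 2 * ‖z - y‖ ^ 2 ≤ f z :=
      descent_lemma f hdf L hL.le hLip y z
    have hzy : z - y = (1 / L) • u := by rw [hz]; abel
    have hnorm : ‖z - y‖ ^ 2 = ‖u‖ ^ 2 / L ^ 2 := by
      rw [hzy, norm_smul, Real.norm_eq_abs, abs_of_pos (by positivity : (0:ℝ) < 1 / L)]
      field_simp
    have hin1 : (inner ℝ (gradient f y) (z - y) : ℝ) = (1 / L) * (inner ℝ (gradient f y) u : ℝ) := by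
      rw [hzy, real_inner_smul_right]
    have hzx : z - x = (y - x) + (1 / L) • u := by rw [hz]; abel
    have hin2 : (inner ℝ (gradient f x) (z - x) : ℝ)
        = (inner ℝ (gradient f x) (y - x) : ℝ) + (1 / L) * (inner ℝ (gradient f x) u : ℝ) := by
      rw [hzx, inner_add_right, real_inner_smul_right]
    have huu : (inner ℝ (gradient f y) u : ℝ) - (inner ℝ (gradient f x) u : ℝ) = ‖u‖ ^ 2 := by
      rw [← inner_sub_left, ← hu, real_inner_self_eq_norm_sq]
    have hnu : ‖gradient f x - gradient f y‖ = ‖u‖ := by rw [hu, norm_sub_rev]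
    rw [hnu]
    rw [hin1] at step2
    rw [hin2] at step1
    have hL2 : (0:ℝ) < L ^ 2 := by positivity
    have := step2.trans step1
    rw [hnorm] at this
    have hgoal : ‖u‖ ^ 2 / (2 * L) = (1 / L) * ‖u‖ ^ 2 - L / 2 * (‖u‖ ^ 2 / L ^ 2) := by
      field_simp; ring
    have h6 : (1 / L) * (inner ℝ (gradient f y) u : ℝ) - (1 / L) * (inner ℝ (gradient f x) u : ℝ)
        = (1 / L) * ‖u‖ ^ 2 := by rw [← mul_sub, huu]
    linarith [this, h6, hgoal]
  have k1 := key x y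
  have k2 := key y x
  have hsw : ‖gradient f y - gradient f x‖ = ‖gradient f x - gradient f y‖ := norm_sub_rev _ _
  rw [hsw] at k2
  have hadd : ‖gradient f x - gradient f y‖ ^ 2 / (2 * L) + ‖gradient f x - gradient f y‖ ^ 2 / (2 * L)
      ≤ (inner ℝ (gradient f x) (y - x) : ℝ) + (inner ℝ (gradient f y) (x - y) : ℝ) := by
    linarith [k1, k2]
  have hcomb : (inner ℝ (gradient f x) (y - x) : ℝ) + (inner ℝ (gradient f y) (x - y) : ℝ)
      = (inner ℝ (gradient f y - gradient f x) (x - y) : ℝ) := by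
    rw [inner_sub_left]
    have : (y - x : EuclideanSpace ℝ (Fin K)) = -(x - y) := by abel
    rw [this, inner_neg_right]
    ring
  rw [hcomb] at hadd
  have h7 : ‖gradient f x - gradient f y‖ ^ 2 / L
      = 2 * (‖gradient f x - gradient f y‖ ^ 2 / (2 * L)) := by
    field_simp
  have : ‖gradient f x - gradient f y‖ ^ 2 / L ≤ (inner ℝ (gradient f y - gradient f x) (x - y) : ℝ) := by
    linarith [hadd, h7]
  calc ‖gradient f x - gradient f y‖ ^ 2 = L * (‖gradient f x - gradient f y‖ ^ 2 / L) := by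
        field_simp
    _ ≤ L * (inner ℝ (gradient f y - gradient f x) (x - y) : ℝ) :=
        mul_le_mul_of_nonneg_left this hL.le

/-- strong monotonicity of the gradient from concavity of `f + α/2‖·‖²` -/
lemma strong_mono (f : EuclideanSpace ℝ (Fin K) → ℝ) (hdf : Differentiable ℝ f)
    (α : ℝ)
    (hconc : ConcaveOn ℝ Set.univ (fun θ : EuclideanSpace ℝ (Fin K) => f θ + α / 2 * ‖θ‖ ^ 2))
    (x y : EuclideanSpace ℝ (Fin K)) :
    (inner ℝ (gradient f x - gradient f y) (x - y) : ℝ) ≤ -α * ‖x - y‖ ^ 2 := by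
  set d : EuclideanSpace ℝ (Fin K) := x - y with hd
  set φ : ℝ → ℝ := fun t => f (y + t • d) + α / 2 * ‖y + t • d‖ ^ 2 with hφdef
  have hφ : ∀ t : ℝ, HasDerivAt φ
      ((inner ℝ (gradient f (y + t • d)) d : ℝ)
        + α / 2 * (2 * (inner ℝ y d : ℝ) + 2 * t * ‖d‖ ^ 2)) t := by
    intro t
    have hexp : ∀ s : ℝ, ‖y + s • d‖ ^ 2
        = ‖y‖ ^ 2 + 2 * (s * (inner ℝ y d : ℝ)) + s ^ 2 * ‖d‖ ^ 2 := by
      intro s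
      rw [norm_add_sq_real, real_inner_smul_right, norm_smul, Real.norm_eq_abs,
        mul_pow, sq_abs]
    have heq : φ = fun s : ℝ => f (y + s • d)
        + α / 2 * (‖y‖ ^ 2 + 2 * (s * (inner ℝ y d : ℝ)) + s ^ 2 * ‖d‖ ^ 2) := by
      funext s
      show f (y + s • d) + α / 2 * ‖y + s • d‖ ^ 2 = _
      rw [hexp s]
    rw [heq]
    have h1 := hasDerivAt_line f hdf y d t
    have h2 : HasDerivAt (fun s : ℝ => α / 2 * (‖y‖ ^ 2 + 2 * (s * (inner ℝ y d : ℝ))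
        + s ^ 2 * ‖d‖ ^ 2)) (α / 2 * (2 * (inner ℝ y d : ℝ) + 2 * t * ‖d‖ ^ 2)) t := by
      have ha : HasDerivAt (fun s : ℝ => ‖y‖ ^ 2 + 2 * (s * (inner ℝ y d : ℝ))
          + s ^ 2 * ‖d‖ ^ 2) (2 * (inner ℝ y d : ℝ) + 2 * t * ‖d‖ ^ 2) t := by
        have hb : HasDerivAt (fun s : ℝ => 2 * (s * (inner ℝ y d : ℝ)))
            (2 * (inner ℝ y d : ℝ)) t := by
          simpa using ((hasDerivAt_id t).mul_const (inner ℝ y d : ℝ)).const_mul 2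
        have hc : HasDerivAt (fun s : ℝ => s ^ 2 * ‖d‖ ^ 2) (2 * t * ‖d‖ ^ 2) t := by
          simpa [mul_comm, mul_assoc] using (hasDerivAt_pow 2 t).mul_const (‖d‖ ^ 2)
        exact (hb.const_add (‖y‖ ^ 2)).add hc
      exact ha.const_mul (α / 2)
    exact h1.add h2
  have hφconc : ConcaveOn ℝ Set.univ φ := by
    have := hconc.comp_affineMap (AffineMap.lineMap y x : ℝ →ᵃ[ℝ] EuclideanSpace ℝ (Fin K))
    simp only [Set.preimage_univ] at this
    have heq : φ = (fun θ : EuclideanSpace ℝ (Fin K) => f θ + α / 2 * ‖θ‖ ^ 2)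
        ∘ ⇑(AffineMap.lineMap y x) := by
      funext t
      have harg : y + t • d = (AffineMap.lineMap y x : ℝ →ᵃ[ℝ] _) t := by
        simp only [AffineMap.lineMap_apply, vsub_eq_sub, vadd_eq_add, hd]
        module
      rw [hφdef]
      simp only [Function.comp_apply, ← harg]
    rw [heq]
    exact this
  have hanti := hφconc.antitoneOn_deriv (fun t _ => (hφ t).differentiableAt)
  have h01 := hanti (Set.mem_univ 0) (Set.mem_univ 1) zero_le_one
  rw [(hφ 0).deriv, (hφ 1).deriv] at h01
  have h0 : y + (0:ℝ) • d = y := by simp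
  have h1 : y + (1:ℝ) • d = x := by rw [hd]; module
  rw [h0, h1] at h01
  have hsub : (inner ℝ (gradient f x) d : ℝ) - (inner ℝ (gradient f y) d : ℝ)
      = (inner ℝ (gradient f x - gradient f y) d : ℝ) := (inner_sub_left _ _ _).symm
  linarith [h01, hsub]
theorem stmt3 {K : ℕ} (f : EuclideanSpace ℝ (Fin K) → ℝ)
    (hf : ContDiff ℝ 2 f) (L : ℝ) (hL : 0 ≤ L)
    (hLip : LipschitzWith (Real.toNNReal L) (fun θ => gradient f θ))
    (α : ℝ) (hα : 0 ≤ α)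
    (hconc : ConcaveOn ℝ Set.univ (fun θ => f θ + α / 2 * ‖θ‖ ^ 2))
    (P : Matrix (Fin K) (Fin K) ℝ) (hP : P.PosDef)
    (lmin lmax : ℝ)
    (hlmin : IsLeast (Set.range hP.1.eigenvalues) lmin)
    (hlmax : IsGreatest (Set.range hP.1.eigenvalues) lmax)
    (hcap : L / 2 ≤ lmin)
    (θ₁ θ₂ θ₁' θ₂' : EuclideanSpace ℝ (Fin K))
    (h₁ : θ₁' = θ₁ + (show EuclideanSpace ℝ (Fin K) from WithLp.toLp 2 ((P⁻¹).mulVec (gradV f θ₁))))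
    (h₂ : θ₂' = θ₂ + (show EuclideanSpace ℝ (Fin K) from WithLp.toLp 2 ((P⁻¹).mulVec (gradV f θ₂)))) :
    (θ₁' - θ₂') ⬝ᵥ P.mulVec (θ₁' - θ₂') ≤
      ((lmax - α * (2 - L / lmin)) / lmax) * ((θ₁ - θ₂) ⬝ᵥ P.mulVec (θ₁ - θ₂)) ∧
    (lmax - α * (2 - L / lmin)) / lmax ∈ Set.Icc (0:ℝ) 1 := by
  have hdf : Differentiable ℝ f := hf.differentiable (by norm_num)
  obtain ⟨j0, hj0⟩ := hlmin.1
  have lmin_pos : 0 < lmin := hj0 ▸ hP.eigenvalues_pos j0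
  have lmax_ge : lmin ≤ lmax := hlmax.2 hlmin.1
  have lmax_pos : 0 < lmax := lt_of_lt_of_le lmin_pos lmax_ge
  have heigmin : ∀ j, lmin ≤ hP.1.eigenvalues j := fun j => hlmin.2 ⟨j, rfl⟩
  have heigmax : ∀ j, hP.1.eigenvalues j ≤ lmax := fun j => hlmax.2 ⟨j, rfl⟩
  -- f is concave
  have hconcf : ConcaveOn ℝ Set.univ f := by
    have hsq := (convexOn_normSq (K := K)).smul (by positivity : (0:ℝ) ≤ α / 2)
    have h2 := hconc.add hsq.neg
    have heq : f = (fun θ => f θ + α / 2 * ‖θ‖ ^ 2) + -fun x => (α / 2) • ‖x‖ ^ 2 := by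
      funext θ
      simp [Pi.add_apply, Pi.neg_apply, Pi.smul_apply, smul_eq_mul]
    rw [heq]
    exact h2
  -- α ≤ L
  have hαL : α ≤ L := by
    set e : EuclideanSpace ℝ (Fin K) := EuclideanSpace.single j0 (1:ℝ) with he
    have hne : ‖e‖ = 1 := by simp [he, EuclideanSpace.norm_single]
    have hsm := strong_mono f hdf α hconc e 0
    rw [sub_zero, hne] at hsm
    have hdist := hLip.dist_le_mul e 0
    rw [dist_eq_norm, dist_eq_norm, sub_zero, hne, mul_one] at hdist
    have hnd : ‖gradient f e - gradient f 0‖ ≤ L := by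
      calc ‖gradient f e - gradient f 0‖ = dist (gradient f e) (gradient f 0) :=
            (dist_eq_norm _ _).symm
        _ ≤ (Real.toNNReal L : ℝ) := hdist
        _ = L := Real.coe_toNNReal L hL
    have habs := abs_real_inner_le_norm (gradient f e - gradient f 0) e
    rw [hne, mul_one] at habs
    have hlow := neg_abs_le (inner ℝ (gradient f e - gradient f 0) e : ℝ)
    nlinarith [hsm, habs, hlow, hnd]
  -- coefficient facts
  have hLlmin : L / lmin ≤ 2 := by rw [div_le_iff₀ lmin_pos]; linarith
  have hfac : 0 ≤ 2 - L / lmin := by linarith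
  have hAnn : 0 ≤ α * (2 - L / lmin) := mul_nonneg hα hfac
  have hnum_le : α * (2 - L / lmin) ≤ lmax := by
    have hdiv : L / lmin * lmin = L := div_mul_cancel₀ L lmin_pos.ne'
    have h1 : L * (2 - L / lmin) ≤ lmin := by nlinarith [sq_nonneg (lmin - L)]
    have h2 : α * (2 - L / lmin) ≤ L * (2 - L / lmin) := mul_le_mul_of_nonneg_right hαL hfac
    linarith
  have hc0 : 0 ≤ (lmax - α * (2 - L / lmin)) / lmax := div_nonneg (by linarith) lmax_pos.le
  have hc1 : (lmax - α * (2 - L / lmin)) / lmax ≤ 1 := by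
    rw [div_le_one lmax_pos]; linarith
  refine ⟨?_, hc0, hc1⟩
  -- main inequality
  set dd : Fin K → ℝ := fun i => θ₁ i - θ₂ i with hdd
  set δ : Fin K → ℝ := fun i => gradient f θ₁ i - gradient f θ₂ i with hδ
  set w : Fin K → ℝ := (P⁻¹).mulVec δ with hw
  have hPt : Pᵀ = P := by
    rw [← P.conjTranspose_eq_transpose_of_trivial]; exact hP.1
  have hPw : P.mulVec w = δ := by
    rw [hw, Matrix.mulVec_mulVec, Matrix.mul_nonsing_inv P hP.det_pos.ne'.isUnit,
      Matrix.one_mulVec]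
  -- scalar abbreviations
  have hδE : δ = ((gradient f θ₁ - gradient f θ₂ : EuclideanSpace ℝ (Fin K)) : Fin K → ℝ) := rfl
  have hddE : dd = ((θ₁ - θ₂ : EuclideanSpace ℝ (Fin K)) : Fin K → ℝ) := rfl
  set N : ℝ := ‖(gradient f θ₁ - gradient f θ₂ : EuclideanSpace ℝ (Fin K))‖ with hN
  set D : ℝ := ‖(θ₁ - θ₂ : EuclideanSpace ℝ (Fin K))‖ with hD
  set S : ℝ := dd ⬝ᵥ δ with hS
  set q : ℝ := w ⬝ᵥ P.mulVec w with hq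
  -- S = ⟪∇f θ₁ - ∇f θ₂, θ₁ - θ₂⟫ and the strong monotonicity bound
  have hS_eq : S = (inner ℝ (gradient f θ₁ - gradient f θ₂) (θ₁ - θ₂) : ℝ) := by
    rw [hS, hδE, hddE, dot_eq_inner]
    exact real_inner_comm _ _
  have hSle : S ≤ -α * D ^ 2 := by
    rw [hS_eq, hD]
    exact strong_mono f hdf α hconc θ₁ θ₂
  -- cocoercivity
  have hcoco : N ^ 2 ≤ L * (-S) := by
    rcases eq_or_lt_of_le hL with hL0 | hLpos
    · have hdist := hLip.dist_le_mul θ₁ θ₂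
      have : dist (gradient f θ₁) (gradient f θ₂) ≤ 0 := by
        calc dist (gradient f θ₁) (gradient f θ₂)
            ≤ (Real.toNNReal L : ℝ) * dist θ₁ θ₂ := hdist
          _ = 0 := by rw [← hL0]; simp
      have hNz : N = 0 := by
        rw [hN, ← dist_eq_norm]; exact le_antisymm this dist_nonneg
      rw [hNz, ← hL0]; simp
    · have h := cocoercive f hdf hconcf L hLpos hLip θ₁ θ₂
      rw [hS_eq]
      have hneg : (inner ℝ (gradient f θ₂ - gradient f θ₁) (θ₁ - θ₂) : ℝ)
          = -(inner ℝ (gradient f θ₁ - gradient f θ₂) (θ₁ - θ₂) : ℝ) := by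
        rw [show (gradient f θ₂ - gradient f θ₁ : EuclideanSpace ℝ (Fin K))
            = -(gradient f θ₁ - gradient f θ₂) by abel, inner_neg_left]
      rw [hneg] at h
      rw [hN] at *
      exact h
  -- bound on q
  have hwq : w ⬝ᵥ δ = q := by rw [hq, hPw]
  have hqmin : lmin * (w ⬝ᵥ w) ≤ q := by
    rw [hq]; exact le_quad P hP.1 (WithLp.toLp 2 w) lmin heigmin
  set W : ℝ := ‖(show EuclideanSpace ℝ (Fin K) from WithLp.toLp 2 w)‖ with hWdef
  have hWnn : 0 ≤ W := norm_nonneg _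
  have hNnn : 0 ≤ N := norm_nonneg _
  have hww : w ⬝ᵥ w = W ^ 2 := by
    rw [show w ⬝ᵥ w = _ from dot_eq_inner (WithLp.toLp 2 w) (WithLp.toLp 2 w), hWdef]; exact real_inner_self_eq_norm_sq _
  have hCS : q ≤ W * N := by
    rw [← hwq, show w ⬝ᵥ δ = _ from dot_eq_inner (WithLp.toLp 2 w) (gradient f θ₁ - gradient f θ₂), hN, hWdef]
    exact real_inner_le_norm _ _
  rw [hww] at hqmin
  have hq_nonneg : 0 ≤ q := by nlinarith [hqmin, lmin_pos, sq_nonneg W]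
  have hq_key : lmin * q ≤ N ^ 2 := by
    rcases eq_or_lt_of_le hq_nonneg with h0 | hpos
    · rw [← h0, mul_zero]; positivity
    · have h1 : q ^ 2 ≤ W ^ 2 * N ^ 2 := by nlinarith [hCS, hq_nonneg, hWnn, hNnn]
      nlinarith [mul_le_mul_of_nonneg_right hqmin (sq_nonneg N),
        mul_le_mul_of_nonneg_left h1 lmin_pos.le, hpos]
  have hq_le : q ≤ (L * (-S)) / lmin := by
    rw [le_div_iff₀ lmin_pos]
    calc q * lmin = lmin * q := mul_comm _ _
      _ ≤ N ^ 2 := hq_key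
      _ ≤ L * (-S) := hcoco
  -- assemble
  have final : ∀ v : Fin K → ℝ, v = dd + w →
      v ⬝ᵥ P.mulVec v ≤ ((lmax - α * (2 - L / lmin)) / lmax) * (dd ⬝ᵥ P.mulVec dd) := by
    intro v hv
    set Q : ℝ := dd ⬝ᵥ P.mulVec dd with hQ
    have hexpand : v ⬝ᵥ P.mulVec v = Q + 2 * S + q := by
      rw [hv]
      rw [Matrix.mulVec_add, add_dotProduct, dotProduct_add,
        dotProduct_add]
      have h1 : dd ⬝ᵥ P.mulVec w = S := by rw [hPw, hS]
      have h2 : w ⬝ᵥ P.mulVec dd = S := by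
        rw [Matrix.dotProduct_mulVec, ← Matrix.mulVec_transpose, hPt, hPw,
          dotProduct_comm, hS]
      rw [h1, h2]
      try rw [← hq]
      try rw [← hQ]
      try rw [← hS]
      try rw [hwq]
      ring
    have hDdot : dd ⬝ᵥ dd = D ^ 2 := by
      rw [hddE, dot_eq_inner, hD]; exact real_inner_self_eq_norm_sq _
    have hQle : Q ≤ lmax * D ^ 2 := by
      rw [hQ, ← hDdot]; exact quad_le P hP.1 (WithLp.toLp 2 dd) lmax heigmax
    have hQnn : lmin * D ^ 2 ≤ Q := by
      rw [hQ, ← hDdot]; exact le_quad P hP.1 (WithLp.toLp 2 dd) lmin heigmin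
    -- chain
    have hLS : (L * (-S)) / lmin = -(L / lmin * S) := by ring
    have step1 : v ⬝ᵥ P.mulVec v ≤ Q + (2 - L / lmin) * S := by
      rw [hexpand]
      have := hq_le
      rw [hLS] at this
      linarith
    have step2 : (2 - L / lmin) * S ≤ (2 - L / lmin) * (-α * D ^ 2) :=
      mul_le_mul_of_nonneg_left hSle hfac
    have step3 : v ⬝ᵥ P.mulVec v ≤ Q - α * (2 - L / lmin) * D ^ 2 := by
      have : (2 - L / lmin) * (-α * D ^ 2) = -(α * (2 - L / lmin) * D ^ 2) := by ring
      linarith [step1, step2, this.le, this.ge]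
    have hdivQ : (α * (2 - L / lmin) / lmax) * Q ≤ α * (2 - L / lmin) * D ^ 2 := by
      have h1 : (α * (2 - L / lmin) / lmax) * Q
          ≤ (α * (2 - L / lmin) / lmax) * (lmax * D ^ 2) :=
        mul_le_mul_of_nonneg_left hQle (div_nonneg hAnn lmax_pos.le)
      have h2 : (α * (2 - L / lmin) / lmax) * (lmax * D ^ 2)
          = α * (2 - L / lmin) * D ^ 2 := by
        field_simp
      linarith
    have hrhs : ((lmax - α * (2 - L / lmin)) / lmax) * Q
        = Q - (α * (2 - L / lmin) / lmax) * Q := by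
      field_simp
    rw [hrhs]
    linarith [step3, hdivQ]
  -- relate θ₁' - θ₂' to dd + w
  have hveq : (θ₁' - θ₂' : EuclideanSpace ℝ (Fin K))
      = (show EuclideanSpace ℝ (Fin K) from WithLp.toLp 2 (dd + w)) := by
    rw [h₁, h₂]
    ext i
    show (θ₁ i + ((P⁻¹).mulVec (gradV f θ₁)) i) - (θ₂ i + ((P⁻¹).mulVec (gradV f θ₂)) i)
      = dd i + w i
    have hwsplit : w = (P⁻¹).mulVec (gradV f θ₁) - (P⁻¹).mulVec (gradV f θ₂) := by
      rw [hw, show δ = gradV f θ₁ - gradV f θ₂ from rfl, Matrix.mulVec_sub]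
    rw [congrFun hwsplit i]
    show (θ₁ i + ((P⁻¹).mulVec (gradV f θ₁)) i) - (θ₂ i + ((P⁻¹).mulVec (gradV f θ₂)) i)
      = (θ₁ i - θ₂ i) + (((P⁻¹).mulVec (gradV f θ₁)) i - ((P⁻¹).mulVec (gradV f θ₂)) i)
    ring
  exact final (WithLp.ofLp (θ₁' - θ₂')) (congrArg WithLp.ofLp hveq)
end
end

section
/- Let ν > 0, σ > 0, and H > 0 with |Φ| < 1 − H(ν+1)/(8νσ²), where H(ν+1)/(8νσ²) < 1 is assumed. Suppose for each observation y_t the update map U_t : ℝ → ℝ sends a prediction μ to the unique solution m of m = μ + H·(ν+1)/(νσ²)·(y_t − m)/(1 + (y_t−m)²/(νσ²)) (uniqueness guaranteed by H⁻¹ > (ν+1)/(8νσ²)). Then the prediction-to-prediction map μ ↦ ω + Φ·U_t(μ) is a strict contraction on ℝ: there exists ρ < 1, namely ρ = |Φ|/(1 − H(ν+1)/(8νσ²)), with |ω + Φ·U_t(μ₁) − ω − Φ·U_t(μ₂)| ≤ ρ·|μ₁ − μ₂| for all μ₁, μ₂. -/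
lemma gmono (s a b : ℝ) (hs : 0 < s) (hab : a ≤ b) :
    a / (1 + a ^ 2 / s) - b / (1 + b ^ 2 / s) ≤ (b - a) / 8 := by
  have ha : (0:ℝ) < 1 + a ^ 2 / s := by positivity
  have hb : (0:ℝ) < 1 + b ^ 2 / s := by positivity
  have e : (b - a) / 8 - (a / (1 + a ^ 2 / s) - b / (1 + b ^ 2 / s))
      = (b - a) * ((3 * s - a * b) ^ 2 + s * (a - b) ^ 2) / (8 * (s + a ^ 2) * (s + b ^ 2)) := by
    have h1 : s + a ^ 2 ≠ 0 := by positivity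
    have h2 : s + b ^ 2 ≠ 0 := by positivity
    field_simp
    ring
  rw [← sub_nonneg, e]
  apply div_nonneg (mul_nonneg (by linarith) (by positivity)) (by positivity)

lemma half (ν σ H y μ₁ μ₂ u₁ u₂ : ℝ) (hν : 0 < ν) (hσ : 0 < σ) (hH : 0 < H)
    (h1 : u₁ = μ₁ + H * ((ν + 1) / (ν * σ ^ 2)) *
      ((y - u₁) / (1 + (y - u₁) ^ 2 / (ν * σ ^ 2))))
    (h2 : u₂ = μ₂ + H * ((ν + 1) / (ν * σ ^ 2)) *
      ((y - u₂) / (1 + (y - u₂) ^ 2 / (ν * σ ^ 2))))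
    (hle : u₂ ≤ u₁) :
    (1 - H * (ν + 1) / (8 * ν * σ ^ 2)) * (u₁ - u₂) ≤ μ₁ - μ₂ := by
  have hs : (0:ℝ) < ν * σ ^ 2 := by positivity
  have hg := gmono (ν * σ ^ 2) (y - u₁) (y - u₂) hs (by linarith)
  have heq : y - u₂ - (y - u₁) = u₁ - u₂ := by ring
  rw [heq] at hg
  have hc : 0 ≤ H * ((ν + 1) / (ν * σ ^ 2)) := by positivity
  have hmul := mul_le_mul_of_nonneg_left hg hc
  have hk : H * ((ν + 1) / (ν * σ ^ 2)) * ((u₁ - u₂) / 8)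
      = H * (ν + 1) / (8 * ν * σ ^ 2) * (u₁ - u₂) := by
    field_simp
    try ring
    try exact Or.inl trivial
  have hμ : μ₁ - μ₂ = (u₁ - u₂) - H * ((ν + 1) / (ν * σ ^ 2)) *
      ((y - u₁) / (1 + (y - u₁) ^ 2 / (ν * σ ^ 2)) - (y - u₂) / (1 + (y - u₂) ^ 2 / (ν * σ ^ 2))) := by
    linear_combination h2 - h1
  rw [mul_sub] at hmul
  linarith [hmul, hk.ge, hk.le]

theorem stmt10 (ν σ H ω Φ : ℝ) (hν : 0 < ν) (hσ : 0 < σ) (hH : 0 < H)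
    (hH1 : H * (ν + 1) / (8 * ν * σ ^ 2) < 1)
    (hΦ : |Φ| < 1 - H * (ν + 1) / (8 * ν * σ ^ 2))
    (y : ℝ) (U : ℝ → ℝ)
    (hU : ∀ μ : ℝ, U μ = μ + H * ((ν + 1) / (ν * σ ^ 2)) *
      ((y - U μ) / (1 + (y - U μ) ^ 2 / (ν * σ ^ 2)))) :
    |Φ| / (1 - H * (ν + 1) / (8 * ν * σ ^ 2)) < 1 ∧
    ∀ μ₁ μ₂ : ℝ,
      |(ω + Φ * U μ₁) - (ω + Φ * U μ₂)| ≤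
        (|Φ| / (1 - H * (ν + 1) / (8 * ν * σ ^ 2))) * |μ₁ - μ₂| := by
  set k := H * (ν + 1) / (8 * ν * σ ^ 2) with hk
  have hkpos : 0 < 1 - k := by linarith
  constructor
  · rw [div_lt_one hkpos]; exact hΦ
  · intro μ₁ μ₂
    have hd : (1 - k) * |U μ₁ - U μ₂| ≤ |μ₁ - μ₂| := by
      rcases le_total (U μ₂) (U μ₁) with h | h
      · have := half ν σ H y μ₁ μ₂ (U μ₁) (U μ₂) hν hσ hH (hU μ₁) (hU μ₂) h
        rw [abs_of_nonneg (by linarith : (0:ℝ) ≤ U μ₁ - U μ₂)]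
        calc (1 - k) * (U μ₁ - U μ₂) ≤ μ₁ - μ₂ := this
          _ ≤ |μ₁ - μ₂| := le_abs_self _
      · have := half ν σ H y μ₂ μ₁ (U μ₂) (U μ₁) hν hσ hH (hU μ₂) (hU μ₁) h
        rw [abs_of_nonpos (by linarith : U μ₁ - U μ₂ ≤ 0)]
        calc (1 - k) * -(U μ₁ - U μ₂) = (1 - k) * (U μ₂ - U μ₁) := by ring
          _ ≤ μ₂ - μ₁ := this
          _ ≤ |μ₁ - μ₂| := by rw [abs_sub_comm]; exact le_abs_self _
    have h1 : (ω + Φ * U μ₁) - (ω + Φ * U μ₂) = Φ * (U μ₁ - U μ₂) := by ring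
    rw [h1, abs_mul, div_mul_eq_mul_div, le_div_iff₀ hkpos]
    calc |Φ| * |U μ₁ - U μ₂| * (1 - k) = |Φ| * ((1 - k) * |U μ₁ - U μ₂|) := by ring
      _ ≤ |Φ| * |μ₁ - μ₂| := mul_le_mul_of_nonneg_left hd (abs_nonneg _)
end

section
/- Let f : ℝ^K → ℝ be twice continuously differentiable with f + (α/2)‖·‖² concave for α ≥ 0, let P be symmetric positive definite, and let θ₀, θ* ∈ ℝ^K. Let θ₁ be the unique maximizer of θ ↦ f(θ) − (1/2)(θ−θ₀)ᵀP(θ−θ₀). Define I* := −∫₀¹ Hess f(u θ₁ + (1−u) θ*) du. Then P^{1/2}(θ₁ − θ*) + P^{−1/2}(∇f(θ*) − ∇f(θ₁)) = P^{1/2}(θ₀ − θ*) + P^{−1/2}∇f(θ*), and consequently ‖θ₁ − θ*‖²_{P + 2I* + I* P⁻¹ I*} = ‖θ₀ − θ*‖²_P + 2⟨θ₀ − θ*, ∇f(θ*)⟩ + ‖∇f(θ*)‖²_{P⁻¹}. -/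
open Matrix
open scoped RealInnerProductSpace

noncomputable section

/-- The square root of a positive semidefinite matrix, as `Matrix.PosSemidef.sqrt` was defined
in the older Mathlib. -/
def posSemidefSqrt {n : Type*} [Fintype n] [DecidableEq n] {A : Matrix n n ℝ}
    (hA : A.PosSemidef) : Matrix n n ℝ :=
  hA.1.eigenvectorUnitary.1 * diagonal ((↑) ∘ (√·) ∘ hA.1.eigenvalues) *
  (star hA.1.eigenvectorUnitary : Matrix n n ℝ)

namespace Stmt11Aux

variable {K : ℕ}

lemma psd_sqrt_mul_self {n : Type*} [Fintype n] [DecidableEq n] {A : Matrix n n ℝ}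
    (hA : A.PosSemidef) : posSemidefSqrt hA * posSemidefSqrt hA = A := by
  conv_rhs => rw [hA.1.spectral_theorem, Unitary.conjStarAlgAut_apply]
  simp only [posSemidefSqrt]
  have hU : (star hA.1.eigenvectorUnitary : Matrix n n ℝ) * hA.1.eigenvectorUnitary = 1 :=
    Unitary.coe_star_mul_self _
  rw [show ∀ X Y Z W : Matrix n n ℝ, X * Y * Z * (W * Y * Z) = X * Y * (Z * W) * Y * Z by
    intro X Y Z W; simp only [Matrix.mul_assoc], hU, Matrix.mul_one, Matrix.mul_assoc _ (diagonal _) (diagonal _), diagonal_mul_diagonal]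
  congr 3
  funext i
  simp [Real.mul_self_sqrt (hA.eigenvalues_nonneg i)]

-- stationarity: directional derivative of f at the maximizer
lemma stat (f : EuclideanSpace ℝ (Fin K) → ℝ) (hf : ContDiff ℝ 2 f)
    (P : Matrix (Fin K) (Fin K) ℝ) (hP : P.PosDef)
    (θ₀ θ₁ : EuclideanSpace ℝ (Fin K))
    (hmax : ∀ θ : EuclideanSpace ℝ (Fin K),
      f θ - (1/2) * ((θ - θ₀) ⬝ᵥ P.mulVec (θ - θ₀)) ≤
        f θ₁ - (1/2) * ((θ₁ - θ₀) ⬝ᵥ P.mulVec (θ₁ - θ₀)))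
    (w : EuclideanSpace ℝ (Fin K)) :
    fderiv ℝ f θ₁ w = w ⬝ᵥ P.mulVec (θ₁ - θ₀) := by
  classical
  set u : EuclideanSpace ℝ (Fin K) := θ₁ - θ₀ with hu
  -- the line through θ₁ in direction w
  set L : ℝ → EuclideanSpace ℝ (Fin K) := fun t => θ₁ + t • w with hL
  have hL0 : L 0 = θ₁ := by simp [hL]
  have hline : ∀ t : ℝ, (L t - θ₀) = (u + t • w : EuclideanSpace ℝ (Fin K)) := by
    intro t; simp [hL, hu]; abel
  have hq : ∀ t : ℝ, (L t - θ₀) ⬝ᵥ P.mulVec (L t - θ₀)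
      = u ⬝ᵥ P.mulVec u + t * (w ⬝ᵥ P.mulVec u + u ⬝ᵥ P.mulVec w)
        + t^2 * (w ⬝ᵥ P.mulVec w) := by
    intro t
    rw [← WithLp.ofLp_sub (x := L t) (y := θ₀), hline t, WithLp.ofLp_add, WithLp.ofLp_smul]
    rw [Matrix.mulVec_add, Matrix.mulVec_smul, add_dotProduct,
      dotProduct_add, dotProduct_add, smul_dotProduct,
      smul_dotProduct, dotProduct_smul, dotProduct_smul]
    simp only [smul_eq_mul]
    ring
  -- the composite scalar function
  set G : ℝ → ℝ := fun t => f (L t) - (1/2) * ((L t - θ₀) ⬝ᵥ P.mulVec (L t - θ₀))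
    with hG
  have hlineDeriv : HasDerivAt L w 0 := by
    simpa [hL] using ((hasDerivAt_id (0:ℝ)).smul_const w).const_add θ₁
  have hfd : HasDerivAt (fun t => f (L t)) (fderiv ℝ f θ₁ w) 0 := by
    have h1 : HasFDerivAt f (fderiv ℝ f θ₁) (L 0) := by
      rw [hL0]
      exact ((hf.differentiable (by norm_num)) θ₁).hasFDerivAt
    exact h1.comp_hasDerivAt 0 hlineDeriv
  have hqd : HasDerivAt (fun t => (1/2) * ((L t - θ₀) ⬝ᵥ P.mulVec (L t - θ₀)))
      ((1/2) * (w ⬝ᵥ P.mulVec u + u ⬝ᵥ P.mulVec w)) 0 := by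
    have hpoly : HasDerivAt (fun t : ℝ => u ⬝ᵥ P.mulVec u
        + t * (w ⬝ᵥ P.mulVec u + u ⬝ᵥ P.mulVec w) + t^2 * (w ⬝ᵥ P.mulVec w))
        (w ⬝ᵥ P.mulVec u + u ⬝ᵥ P.mulVec w) 0 := by
      have h1 : HasDerivAt (fun t : ℝ => t * (w ⬝ᵥ P.mulVec u + u ⬝ᵥ P.mulVec w))
          (w ⬝ᵥ P.mulVec u + u ⬝ᵥ P.mulVec w) 0 := by
        simpa using (hasDerivAt_id (0:ℝ)).mul_const (w ⬝ᵥ P.mulVec u + u ⬝ᵥ P.mulVec w)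
      have h2 : HasDerivAt (fun t : ℝ => t^2 * (w ⬝ᵥ P.mulVec w)) 0 0 := by
        simpa using (hasDerivAt_pow 2 (0:ℝ)).mul_const (w ⬝ᵥ P.mulVec w)
      have h4 := (h1.const_add (u ⬝ᵥ P.mulVec u)).add h2
      rw [add_zero] at h4
      exact h4
    have heq : (fun t : ℝ => (L t - θ₀) ⬝ᵥ P.mulVec (L t - θ₀))
        = (fun t : ℝ => u ⬝ᵥ P.mulVec u
          + t * (w ⬝ᵥ P.mulVec u + u ⬝ᵥ P.mulVec w) + t^2 * (w ⬝ᵥ P.mulVec w)) :=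
      funext hq
    have h3 := hpoly.const_mul (1/2 : ℝ)
    exact h3.congr_of_eventuallyEq (Filter.Eventually.of_forall fun t => by
      simp only []
      rw [hq t])
  have hGd : HasDerivAt G
      (fderiv ℝ f θ₁ w - (1/2) * (w ⬝ᵥ P.mulVec u + u ⬝ᵥ P.mulVec w)) 0 :=
    hfd.sub hqd
  have hmaxG : IsLocalMax G 0 := by
    apply Filter.Eventually.of_forall
    intro t
    have := hmax (L t)
    simpa [hG, hL0, hu] using this
  have hzero := hmaxG.hasDerivAt_eq_zero hGd
  have hPT : Pᵀ = P :=
    (Matrix.conjTranspose_eq_transpose_of_trivial P).symm.trans hP.isHermitian.eq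
  have hsymm : u ⬝ᵥ P.mulVec w = w ⬝ᵥ P.mulVec u := by
    have h1 : u ᵥ* P = P *ᵥ u := by
      conv_lhs => rw [← hPT]
      exact Matrix.vecMul_transpose P u
    rw [Matrix.dotProduct_mulVec, h1, dotProduct_comm]
  have : fderiv ℝ f θ₁ w = (1/2) * (w ⬝ᵥ P.mulVec u + u ⬝ᵥ P.mulVec w) := by
    linarith [hzero]
  rw [this, hsymm, hu, WithLp.ofLp_sub]; ring

lemma ftc (f : EuclideanSpace ℝ (Fin K) → ℝ) (hf : ContDiff ℝ 2 f)
    (θs θ₁ : EuclideanSpace ℝ (Fin K))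
    (Istar : Matrix (Fin K) (Fin K) ℝ)
    (hI : ∀ i j : Fin K, Istar i j =
      -∫ u in (0:ℝ)..1, iteratedFDeriv ℝ 2 f (u • θ₁ + (1 - u) • θs)
        ![EuclideanSpace.single i (1:ℝ), EuclideanSpace.single j 1]) (i : Fin K) :
    Istar.mulVec (θ₁ - θs) i =
      fderiv ℝ f θs (EuclideanSpace.single i 1)
        - fderiv ℝ f θ₁ (EuclideanSpace.single i 1) := by
  classical
  set D2 : EuclideanSpace ℝ (Fin K) → EuclideanSpace ℝ (Fin K) →L[ℝ] EuclideanSpace ℝ (Fin K) →L[ℝ] ℝ := fderiv ℝ (fderiv ℝ f) with hD2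
  set e : Fin K → EuclideanSpace ℝ (Fin K) := fun i => EuclideanSpace.single i 1 with he
  set γ : ℝ → EuclideanSpace ℝ (Fin K) := fun u => u • θ₁ + (1 - u) • θs with hγdef
  set v : EuclideanSpace ℝ (Fin K) := θ₁ - θs with hv
  have hf1 : ContDiff ℝ 1 (fderiv ℝ f) := hf.fderiv_right (le_refl _)
  have hcontD2 : Continuous D2 := hf1.continuous_fderiv one_ne_zero
  have hsymmD2 : ∀ x a b : EuclideanSpace ℝ (Fin K), D2 x a b = D2 x b a := fun x =>
    (hf.contDiffAt.isSymmSndFDerivAt (by norm_num)).eq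
  have hγcont : Continuous γ := by fun_prop
  have hγ : ∀ u : ℝ, HasDerivAt γ v u := by
    intro u
    have h0 : γ = fun u : ℝ => θs + u • v := by
      funext u
      simp only [hγdef, hv, smul_sub, sub_smul, one_smul]
      abel
    rw [h0]
    simpa using ((hasDerivAt_id u).smul_const v).const_add θs
  have hγ0 : γ 0 = θs := by simp [hγdef]
  have hγ1 : γ 1 = θ₁ := by simp [hγdef]
  -- derivative of the partials along the path
  have hg : ∀ w : EuclideanSpace ℝ (Fin K), ∀ u : ℝ,
      HasDerivAt (fun u => fderiv ℝ f (γ u) w) (D2 (γ u) v w) u := by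
    intro w u
    have h1 : HasFDerivAt (fderiv ℝ f) (D2 (γ u)) (γ u) :=
      ((hf1.differentiable one_ne_zero) (γ u)).hasFDerivAt
    have h2 := h1.comp_hasDerivAt u (hγ u)
    have h3 := h2.clm_apply (hasDerivAt_const u w)
    simpa using h3
  have hintcont : ∀ a b : EuclideanSpace ℝ (Fin K), Continuous (fun u : ℝ => D2 (γ u) a b) := by
    intro a b
    exact ((hcontD2.comp hγcont).clm_apply continuous_const).clm_apply
      continuous_const
  have key : ∀ w : EuclideanSpace ℝ (Fin K), (∫ u in (0:ℝ)..1, D2 (γ u) v w)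
      = fderiv ℝ f θ₁ w - fderiv ℝ f θs w := by
    intro w
    rw [← hγ1, ← hγ0]
    exact intervalIntegral.integral_eq_sub_of_hasDerivAt
      (fun u _ => hg w u) ((hintcont v w).intervalIntegrable 0 1)
  -- rewrite the entries of Istar
  have hI' : ∀ i j : Fin K, Istar i j = -∫ u in (0:ℝ)..1, D2 (γ u) (e j) (e i) := by
    intro i j
    rw [hI i j]
    congr 1
    apply intervalIntegral.integral_congr
    intro u _
    show iteratedFDeriv ℝ 2 f (u • θ₁ + (1 - u) • θs)
        ![EuclideanSpace.single i 1, EuclideanSpace.single j 1] = D2 (γ u) (e j) (e i)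
    rw [iteratedFDeriv_two_apply]
    simp only [Matrix.cons_val_zero, Matrix.cons_val_one, Matrix.head_cons]
    exact hsymmD2 (γ u) (e i) (e j)
  -- express Istar.mulVec via an integral
  have hmv : Istar.mulVec v i = -∫ u in (0:ℝ)..1, D2 (γ u) v (e i) := by
    have hsum : ∀ u : ℝ, D2 (γ u) v (e i)
        = ∑ j : Fin K, (θ₁ - θs : EuclideanSpace ℝ (Fin K)) j * D2 (γ u) (e j) (e i) := by
      intro u
      have hvsum : v = ∑ j : Fin K, (θ₁ - θs : EuclideanSpace ℝ (Fin K)) j • e j := by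
        ext k
        simp only [he]
        rw [WithLp.ofLp_sum, Finset.sum_apply]
        simp only [PiLp.smul_apply, EuclideanSpace.single_apply, smul_eq_mul,
          mul_ite, mul_one, mul_zero]
        rw [Finset.sum_ite_eq]
        simp [hv]
      conv_lhs => rw [hvsum]
      simp [ContinuousLinearMap.sum_apply, smul_eq_mul]
    have : (∫ u in (0:ℝ)..1, D2 (γ u) v (e i))
        = ∑ j : Fin K, (θ₁ - θs : EuclideanSpace ℝ (Fin K)) j
            * ∫ u in (0:ℝ)..1, D2 (γ u) (e j) (e i) := by
      rw [intervalIntegral.integral_congr (g := fun u => ∑ j : Fin K,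
        (θ₁ - θs : EuclideanSpace ℝ (Fin K)) j * D2 (γ u) (e j) (e i))
        (fun u _ => hsum u)]
      rw [intervalIntegral.integral_finset_sum]
      · exact Finset.sum_congr rfl fun j _ => by
          rw [intervalIntegral.integral_const_mul]
      · intro j _
        exact (continuous_const.mul (hintcont (e j) (e i))).intervalIntegrable 0 1
    rw [this, Matrix.mulVec, dotProduct]
    rw [← Finset.sum_neg_distrib]
    apply Finset.sum_congr rfl
    intro j _
    rw [hI' i j]
    ring
  rw [← WithLp.ofLp_sub, ← hv, hmv, key (e i)]
  ring

lemma symm_vecMul (A : Matrix (Fin K) (Fin K) ℝ) (hA : Aᵀ = A) (x : Fin K → ℝ) :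
    x ᵥ* A = A *ᵥ x := by
  conv_lhs => rw [← hA]
  exact Matrix.vecMul_transpose A x

lemma dot_symm (A : Matrix (Fin K) (Fin K) ℝ) (hA : Aᵀ = A) (x y : Fin K → ℝ) :
    x ⬝ᵥ A *ᵥ y = y ⬝ᵥ A *ᵥ x := by
  rw [Matrix.dotProduct_mulVec, symm_vecMul A hA, dotProduct_comm]

lemma istar_symm (f : EuclideanSpace ℝ (Fin K) → ℝ) (hf : ContDiff ℝ 2 f)
    (θs θ₁ : EuclideanSpace ℝ (Fin K))
    (Istar : Matrix (Fin K) (Fin K) ℝ)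
    (hI : ∀ i j : Fin K, Istar i j =
      -∫ u in (0:ℝ)..1, iteratedFDeriv ℝ 2 f (u • θ₁ + (1 - u) • θs)
        ![EuclideanSpace.single i (1:ℝ), EuclideanSpace.single j 1]) :
    Istarᵀ = Istar := by
  ext i j
  rw [Matrix.transpose_apply, hI j i, hI i j]
  congr 1
  apply intervalIntegral.integral_congr
  intro u _
  have hsymm := (hf.contDiffAt
    (x := u • θ₁ + (1 - u) • θs)).isSymmSndFDerivAt (by norm_num)
  show iteratedFDeriv ℝ 2 f (u • θ₁ + (1 - u) • θs)
      ![EuclideanSpace.single j 1, EuclideanSpace.single i 1]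
    = iteratedFDeriv ℝ 2 f (u • θ₁ + (1 - u) • θs)
      ![EuclideanSpace.single i 1, EuclideanSpace.single j 1]
  rw [iteratedFDeriv_two_apply, iteratedFDeriv_two_apply]
  simp only [Matrix.cons_val_zero, Matrix.cons_val_one, Matrix.head_cons]
  exact hsymm.eq _ _

lemma gradV_eq (f : EuclideanSpace ℝ (Fin K) → ℝ) (x : EuclideanSpace ℝ (Fin K)) (i : Fin K) :
    gradV f x i = fderiv ℝ f x (EuclideanSpace.single i 1) := by
  have h : fderiv ℝ f x (EuclideanSpace.single i 1)
      = ⟪gradient f x, EuclideanSpace.single i 1⟫ := by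
    rw [gradient, ← InnerProductSpace.toDual_apply_apply,
      (InnerProductSpace.toDual ℝ _).apply_symm_apply]
  rw [h]
  have := EuclideanSpace.inner_single_right (𝕜 := ℝ) i 1 (gradient f x)
  rw [this]
  simp [gradV]

lemma algebra (P Istar : Matrix (Fin K) (Fin K) ℝ)
    (hPT : Pᵀ = P) (hPinvT : (P⁻¹)ᵀ = P⁻¹) (hIT : Istarᵀ = Istar)
    (hPinvP : P⁻¹ * P = 1)
    (a b gs W : Fin K → ℝ) (hW : Istar.mulVec a = W)
    (hgs : gs = W + (P.mulVec a - P.mulVec b)) :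
    a ⬝ᵥ (P + (2:ℝ) • Istar + Istar * P⁻¹ * Istar).mulVec a =
      b ⬝ᵥ P.mulVec b + 2 * (b ⬝ᵥ gs) + gs ⬝ᵥ (P⁻¹).mulVec gs := by
  have hdotI : ∀ x : Fin K → ℝ, a ⬝ᵥ Istar *ᵥ x = W ⬝ᵥ x := fun x => by
    rw [Matrix.dotProduct_mulVec, symm_vecMul Istar hIT, hW]
  have hPPinv : ∀ x : Fin K → ℝ, (P⁻¹).mulVec (P.mulVec x) = x := fun x => by
    rw [Matrix.mulVec_mulVec, hPinvP, Matrix.one_mulVec]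
  have hLHS : a ⬝ᵥ (P + (2:ℝ) • Istar + Istar * P⁻¹ * Istar).mulVec a
      = a ⬝ᵥ P.mulVec a + 2 * (a ⬝ᵥ W) + W ⬝ᵥ (P⁻¹).mulVec W := by
    rw [Matrix.add_mulVec, Matrix.add_mulVec, dotProduct_add,
      dotProduct_add, Matrix.smul_mulVec, dotProduct_smul,
      ← Matrix.mulVec_mulVec, ← Matrix.mulVec_mulVec, hW, hdotI]
    simp only [smul_eq_mul]
  rw [hLHS, hgs]
  simp only [Matrix.mulVec_add, Matrix.mulVec_sub, dotProduct_add,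
    add_dotProduct, dotProduct_sub, sub_dotProduct,
    hPPinv]
  have c1 : (P.mulVec a) ⬝ᵥ a = a ⬝ᵥ P.mulVec a := dotProduct_comm _ _
  have c2 : (P.mulVec a) ⬝ᵥ b = b ⬝ᵥ P.mulVec a := dotProduct_comm _ _
  have c3 : (P.mulVec b) ⬝ᵥ a = a ⬝ᵥ P.mulVec b := dotProduct_comm _ _
  have c4 : (P.mulVec b) ⬝ᵥ b = b ⬝ᵥ P.mulVec b := dotProduct_comm _ _
  have c5 : a ⬝ᵥ P.mulVec b = b ⬝ᵥ P.mulVec a := dot_symm P hPT _ _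
  have c6 : (P.mulVec a) ⬝ᵥ (P⁻¹).mulVec W = W ⬝ᵥ a := by
    rw [dot_symm P⁻¹ hPinvT, hPPinv]
  have c7 : (P.mulVec b) ⬝ᵥ (P⁻¹).mulVec W = W ⬝ᵥ b := by
    rw [dot_symm P⁻¹ hPinvT, hPPinv]
  have c8 : W ⬝ᵥ a = a ⬝ᵥ W := dotProduct_comm _ _
  have c9 : W ⬝ᵥ b = b ⬝ᵥ W := dotProduct_comm _ _
  linarith [c1, c2, c3, c4, c5, c6, c7, c8, c9]


end Stmt11Aux

open Stmt11Aux in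
theorem stmt11 {K : ℕ} (f : EuclideanSpace ℝ (Fin K) → ℝ)
    (hf : ContDiff ℝ 2 f) (α : ℝ) (hα : 0 ≤ α)
    (hconc : ConcaveOn ℝ Set.univ (fun θ => f θ + α / 2 * ‖θ‖ ^ 2))
    (P : Matrix (Fin K) (Fin K) ℝ) (hP : P.PosDef)
    (θ₀ θs θ₁ : EuclideanSpace ℝ (Fin K))
    (hmax : ∀ θ : EuclideanSpace ℝ (Fin K),
      f θ - (1/2) * ((θ - θ₀) ⬝ᵥ P.mulVec (θ - θ₀)) ≤
        f θ₁ - (1/2) * ((θ₁ - θ₀) ⬝ᵥ P.mulVec (θ₁ - θ₀)))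
    (huniq : ∀ θ : EuclideanSpace ℝ (Fin K),
      (∀ θ' : EuclideanSpace ℝ (Fin K),
        f θ' - (1/2) * ((θ' - θ₀) ⬝ᵥ P.mulVec (θ' - θ₀)) ≤
          f θ - (1/2) * ((θ - θ₀) ⬝ᵥ P.mulVec (θ - θ₀))) → θ = θ₁)
    (Istar : Matrix (Fin K) (Fin K) ℝ)
    (hI : ∀ i j : Fin K, Istar i j =
      -∫ u in (0:ℝ)..1, iteratedFDeriv ℝ 2 f (u • θ₁ + (1 - u) • θs)
        ![EuclideanSpace.single i (1:ℝ), EuclideanSpace.single j 1]) :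
    ((show EuclideanSpace ℝ (Fin K) from WithLp.toLp 2 ((posSemidefSqrt hP.posSemidef).mulVec (θ₁ - θs))) +
      (show EuclideanSpace ℝ (Fin K) from
        WithLp.toLp 2 (((posSemidefSqrt hP.posSemidef)⁻¹).mulVec (gradient f θs - gradient f θ₁))) =
     (show EuclideanSpace ℝ (Fin K) from WithLp.toLp 2 ((posSemidefSqrt hP.posSemidef).mulVec (θ₀ - θs))) +
      (show EuclideanSpace ℝ (Fin K) from
        WithLp.toLp 2 (((posSemidefSqrt hP.posSemidef)⁻¹).mulVec (gradV f θs)))) ∧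
    (θ₁ - θs) ⬝ᵥ (P + (2:ℝ) • Istar + Istar * P⁻¹ * Istar).mulVec (θ₁ - θs) =
      (θ₀ - θs) ⬝ᵥ P.mulVec (θ₀ - θs) + 2 * ⟪θ₀ - θs, gradient f θs⟫ +
        gradV f θs ⬝ᵥ (P⁻¹).mulVec (gradV f θs) := by
  classical
  have hPT : Pᵀ = P :=
    (Matrix.conjTranspose_eq_transpose_of_trivial P).symm.trans hP.isHermitian.eq
  have hPinvT : (P⁻¹)ᵀ = P⁻¹ := by rw [Matrix.transpose_nonsing_inv, hPT]
  have hIT : Istarᵀ = Istar := istar_symm f hf θs θ₁ Istar hI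
  set S := posSemidefSqrt hP.posSemidef with hSdef
  have hSS : S * S = P := psd_sqrt_mul_self hP.posSemidef
  have hdetS : IsUnit S.det := by
    have h2 : S.det * S.det = P.det := by rw [← Matrix.det_mul, hSS]
    have h3 := hP.det_pos
    refine isUnit_iff_ne_zero.2 fun h0 => ?_
    rw [h0, mul_zero] at h2
    exact absurd h2.symm (ne_of_gt h3)
  have hSinvS : S⁻¹ * S = 1 := Matrix.nonsing_inv_mul S hdetS
  have hSinvP : S⁻¹ * P = S := by
    rw [← hSS, ← Matrix.mul_assoc, hSinvS, Matrix.one_mul]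
  have hdetP : IsUnit P.det := isUnit_iff_ne_zero.2 (ne_of_gt hP.det_pos)
  have hPinvP : P⁻¹ * P = 1 := Matrix.nonsing_inv_mul P hdetP
  have hg1 : gradV f θ₁ = P.mulVec (θ₁ - θ₀) := by
    funext i
    rw [gradV_eq, stat f hf P hP θ₀ θ₁ hmax]
    simp [dotProduct, EuclideanSpace.single_apply, ite_mul, one_mul, zero_mul]
  have hFTC : Istar.mulVec (θ₁ - θs) = gradV f θs - gradV f θ₁ := by
    funext i
    rw [ftc f hf θs θ₁ Istar hI i, Pi.sub_apply, gradV_eq, gradV_eq]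
  have h10 : (θ₁ - θ₀ : EuclideanSpace ℝ (Fin K)) = (θ₁ - θs) - (θ₀ - θs) := by
    abel
  have hgs : gradV f θs
      = Istar.mulVec (θ₁ - θs)
        + (P.mulVec (θ₁ - θs) - P.mulVec (θ₀ - θs)) := by
    have e2 : P.mulVec ((θ₁ - θs) - (θ₀ - θs) : EuclideanSpace ℝ (Fin K))
        = P.mulVec (θ₁ - θs) - P.mulVec (θ₀ - θs) := Matrix.mulVec_sub _ _ _
    rw [hFTC, hg1]
    simp only [Matrix.mulVec_sub]
    funext i
    simp only [Pi.sub_apply, Pi.add_apply]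
    ring
  constructor
  · rw [← WithLp.toLp_add, ← WithLp.toLp_add]
    congr 1
    show S.mulVec (θ₁ - θs)
        + S⁻¹.mulVec (gradV f θs - gradV f θ₁)
      = S.mulVec (θ₀ - θs) + S⁻¹.mulVec (gradV f θs)
    have e1 : (S⁻¹).mulVec (gradV f θs - gradV f θ₁)
        = (S⁻¹).mulVec (gradV f θs)
          - S.mulVec ((θ₁ - θs) - (θ₀ - θs) : EuclideanSpace ℝ (Fin K)) := by
      rw [Matrix.mulVec_sub, hg1, Matrix.mulVec_mulVec, hSinvP, ← WithLp.ofLp_sub (x := θ₁) (y := θ₀), h10]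
    have e2 : S.mulVec ((θ₁ - θs) - (θ₀ - θs) : EuclideanSpace ℝ (Fin K))
        = S.mulVec (θ₁ - θs) - S.mulVec (θ₀ - θs) := Matrix.mulVec_sub _ _ _
    rw [e1, e2]
    abel
  · have hinner : ⟪θ₀ - θs, gradient f θs⟫ = (θ₀ - θs) ⬝ᵥ gradV f θs := by
      simp only [PiLp.inner_apply, dotProduct, gradV, RCLike.inner_apply, conj_trivial]
      exact Finset.sum_congr rfl fun i _ => by ring
    rw [hinner]
    exact algebra P Istar hPT hPinvT hIT hPinvP (θ₁ - θs) (θ₀ - θs)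
      (gradV f θs) (Istar.mulVec (θ₁ - θs)) rfl hgs
end
end

section
/- Let f : ℝ^K → ℝ be twice continuously differentiable, P symmetric positive definite, and suppose f + (α/2)‖·‖² is concave for some α ≥ 0. Let θ₀, θ* ∈ ℝ^K and let θ₁ be any point. Define I* := −∫₀¹ Hess f(u θ₁ + (1−u) θ*) du, so that I* ⪰ α·I. Then ‖θ₁ − θ*‖²_{P + 2I* + I* P⁻¹ I*} ≥ ((λmax(P)+α)/λmax(P))² · ‖θ₁ − θ*‖²_P. -/
open Matrix

noncomputable section


lemma spec_aux {K : ℕ} (P : Matrix (Fin K) (Fin K) ℝ) (hP : P.PosDef)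
    (lmax : ℝ) (hlmax : IsGreatest (Set.range hP.1.eigenvalues) lmax)
    (x : Fin K → ℝ) :
    x ⬝ᵥ P *ᵥ x ≤ lmax * (x ⬝ᵥ x) ∧ x ⬝ᵥ x ≤ lmax * (x ⬝ᵥ P⁻¹ *ᵥ x) := by
  classical
  set U : Matrix (Fin K) (Fin K) ℝ := (hP.1.eigenvectorUnitary : Matrix (Fin K) (Fin K) ℝ) with hU
  set ev := hP.1.eigenvalues with hev
  set y : Fin K → ℝ := (star U) *ᵥ x with hy
  have hUU : U * star U = 1 := (Matrix.mem_unitaryGroup_iff).mp hP.1.eigenvectorUnitary.2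
  have hUU' : star U * U = 1 := (Matrix.mem_unitaryGroup_iff').mp hP.1.eigenvectorUnitary.2
  have hstarU : star U = Uᵀ := by
    rw [Matrix.star_eq_conjTranspose, Matrix.conjTranspose_eq_transpose_of_trivial]
  have hvm : ∀ w : Fin K → ℝ, x ⬝ᵥ U *ᵥ w = y ⬝ᵥ w := by
    intro w
    rw [Matrix.dotProduct_mulVec, hy, hstarU, ← Matrix.vecMul_transpose, Matrix.transpose_transpose]
  have hspec : P = U * Matrix.diagonal ev * star U := by
    have := hP.1.spectral_theorem
    simpa using this
  have hevpos : ∀ i, 0 < ev i := fun i => hP.eigenvalues_pos i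
  have hle : ∀ i, ev i ≤ lmax := fun i => hlmax.2 ⟨i, rfl⟩
  have hlpos : 0 < lmax := by
    obtain ⟨i, hi⟩ := hlmax.1
    exact hi ▸ hevpos i
  have h2 : x ⬝ᵥ P *ᵥ x = ∑ i, ev i * y i ^ 2 := by
    rw [hspec, ← Matrix.mulVec_mulVec, ← Matrix.mulVec_mulVec, hvm]
    simp [dotProduct, Matrix.mulVec_diagonal]
    ring_nf
    exact Finset.sum_congr rfl fun i _ => by ring
  have hinv : P⁻¹ = U * Matrix.diagonal (fun i => (ev i)⁻¹) * star U := by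
    apply Matrix.inv_eq_right_inv
    rw [hspec]
    calc U * Matrix.diagonal ev * star U * (U * Matrix.diagonal (fun i => (ev i)⁻¹) * star U)
        = U * (Matrix.diagonal ev * (star U * U) * Matrix.diagonal (fun i => (ev i)⁻¹)) * star U := by
          ring_nf
          noncomm_ring
      _ = 1 := by
          rw [hUU', mul_one, Matrix.diagonal_mul_diagonal]
          have : (fun i => ev i * (ev i)⁻¹) = fun _ => (1:ℝ) := by
            funext i; exact mul_inv_cancel₀ (hevpos i).ne'
          rw [this, Matrix.diagonal_one, mul_one, hUU]
  have h3 : x ⬝ᵥ P⁻¹ *ᵥ x = ∑ i, (ev i)⁻¹ * y i ^ 2 := by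
    rw [hinv, ← Matrix.mulVec_mulVec, ← Matrix.mulVec_mulVec, hvm]
    simp [dotProduct, Matrix.mulVec_diagonal]
    exact Finset.sum_congr rfl fun i _ => by ring
  have h1 : x ⬝ᵥ x = ∑ i, y i ^ 2 := by
    have : x ⬝ᵥ x = x ⬝ᵥ (U * star U) *ᵥ x := by rw [hUU, Matrix.one_mulVec]
    rw [this, ← Matrix.mulVec_mulVec, hvm]
    simp [dotProduct, hy, pow_two]
  constructor
  · rw [h2, h1, Finset.mul_sum]
    exact Finset.sum_le_sum fun i _ => mul_le_mul_of_nonneg_right (hle i) (sq_nonneg _)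
  · rw [h3, h1, Finset.mul_sum]
    refine Finset.sum_le_sum fun i _ => ?_
    rw [← mul_assoc]
    refine le_mul_of_one_le_left (sq_nonneg _) ?_
    rw [← div_eq_mul_inv]
    exact (one_le_div (hevpos i)).mpr (hle i)

lemma antitone_deriv_nonpos {g : ℝ → ℝ} (hg : Antitone g) {d : ℝ} (h : HasDerivAt g d 0) :
    d ≤ 0 := by
  have ht : Filter.Tendsto (slope g 0) (nhdsWithin 0 (Set.Ioi 0)) (nhds d) :=
    (hasDerivAt_iff_tendsto_slope.mp h).mono_left
      (nhdsWithin_mono 0 (fun t ht => by simpa using ne_of_gt ht))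
  refine le_of_tendsto ht ?_
  filter_upwards [self_mem_nhdsWithin] with t ht
  have h1 : g t ≤ g 0 := hg (le_of_lt ht)
  have : slope g 0 t = (g t - g 0) / t := by simp [slope_def_field]
  rw [this]
  exact div_nonpos_of_nonpos_of_nonneg (by linarith) (le_of_lt ht)

lemma hess_bound {K : ℕ} {f : EuclideanSpace ℝ (Fin K) → ℝ} (hf : ContDiff ℝ 2 f) {α : ℝ}
    (hconc : ConcaveOn ℝ Set.univ (fun θ => f θ + α / 2 * ‖θ‖ ^ 2))
    (x v : EuclideanSpace ℝ (Fin K)) :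
    fderiv ℝ (fderiv ℝ f) x v v ≤ -(α * ‖v‖ ^ 2) := by
  have hdf : Differentiable ℝ f := hf.differentiable two_ne_zero
  have hF : ContDiff ℝ 1 (fderiv ℝ f) := hf.fderiv_right (by norm_num)
  have hFd : Differentiable ℝ (fderiv ℝ f) := hF.differentiable one_ne_zero
  set c : ℝ → EuclideanSpace ℝ (Fin K) := fun t => t • v + x with hcdef
  have hc : ∀ t, HasDerivAt c v t := by
    intro t
    have := ((hasDerivAt_id t).smul_const v).add_const x
    simpa [hcdef] using this
  have hc0 : c 0 = x := by simp [hcdef]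
  set φ : ℝ → ℝ := fun t => f (c t) + α / 2 * ‖c t‖ ^ 2 with hφdef
  have hφconc : ConcaveOn ℝ Set.univ φ := by
    have h := hconc.comp_affineMap (AffineMap.lineMap (x : EuclideanSpace ℝ (Fin K)) (x + v))
    have heq : ((fun θ => f θ + α / 2 * ‖θ‖ ^ 2) ∘
        (AffineMap.lineMap (x : EuclideanSpace ℝ (Fin K)) (x + v))) = φ := by
      funext t
      simp [AffineMap.lineMap_apply, hφdef, hcdef, vsub_eq_sub, vadd_eq_add, add_sub_cancel_left]
    rw [heq] at h
    simpa using h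
  set ψ : ℝ → ℝ := fun t => fderiv ℝ f (c t) v + α * (inner ℝ (c t) v : ℝ) with hψdef
  have hψ : ∀ t, HasDerivAt φ (ψ t) t := by
    intro t
    have h1 : HasDerivAt (fun t => f (c t)) (fderiv ℝ f (c t) v) t :=
      (hdf (c t)).hasFDerivAt.comp_hasDerivAt t (hc t)
    have h2 : HasDerivAt (fun t => (inner ℝ (c t) (c t) : ℝ))
        ((inner ℝ (c t) v : ℝ) + (inner ℝ v (c t) : ℝ)) t := (hc t).inner ℝ (hc t)
    have h2' : HasDerivAt (fun t => α / 2 * (inner ℝ (c t) (c t) : ℝ))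
        (α / 2 * ((inner ℝ (c t) v : ℝ) + (inner ℝ v (c t) : ℝ))) t := h2.const_mul _
    have heq : φ = fun t => f (c t) + α / 2 * (inner ℝ (c t) (c t) : ℝ) := by
      funext s; rw [hφdef, real_inner_self_eq_norm_sq]
    rw [heq]
    have := h1.add h2'
    refine this.congr_deriv ?_
    rw [hψdef, real_inner_comm (c t) v]
    ring
  have hψanti : Antitone ψ := by
    have h := hφconc.antitoneOn_deriv (fun t _ => (hψ t).differentiableAt)
    intro a b hab
    have := h (Set.mem_univ a) (Set.mem_univ b) hab
    rwa [(hψ a).deriv, (hψ b).deriv] at this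
  have hψ' : HasDerivAt ψ (fderiv ℝ (fderiv ℝ f) x v v + α * ‖v‖ ^ 2) 0 := by
    have h1 : HasDerivAt (fun t => fderiv ℝ f (c t)) (fderiv ℝ (fderiv ℝ f) x v) 0 := by
      have h := (hFd (c 0)).hasFDerivAt.comp_hasDerivAt 0 (hc 0)
      rwa [hc0] at h
    have h1' : HasDerivAt (fun t => fderiv ℝ f (c t) v) (fderiv ℝ (fderiv ℝ f) x v v) 0 := by
      have := h1.clm_apply (hasDerivAt_const 0 v)
      simpa using this
    have h2 : HasDerivAt (fun t => (inner ℝ (c t) v : ℝ)) (‖v‖ ^ 2) 0 := by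
      have h := (hc 0).inner ℝ (hasDerivAt_const (0:ℝ) v)
      have he : (inner ℝ (c 0) (0 : EuclideanSpace ℝ (Fin K)) : ℝ) + (inner ℝ v v : ℝ) = ‖v‖ ^ 2 := by
        rw [inner_zero_right, real_inner_self_eq_norm_sq]; ring
      rwa [he] at h
    have := h1'.add (h2.const_mul α)
    exact this
  have := antitone_deriv_nonpos hψanti hψ'
  linarith


set_option maxHeartbeats 2000000 in
theorem stmt12 {K : ℕ} (f : EuclideanSpace ℝ (Fin K) → ℝ)
    (hf : ContDiff ℝ 2 f) (α : ℝ) (hα : 0 ≤ α)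
    (hconc : ConcaveOn ℝ Set.univ (fun θ => f θ + α / 2 * ‖θ‖ ^ 2))
    (P : Matrix (Fin K) (Fin K) ℝ) (hP : P.PosDef)
    (lmax : ℝ) (hlmax : IsGreatest (Set.range hP.1.eigenvalues) lmax)
    (θ₀ θs θ₁ : EuclideanSpace ℝ (Fin K))
    (Istar : Matrix (Fin K) (Fin K) ℝ)
    (hI : ∀ i j : Fin K, Istar i j =
      -∫ u in (0:ℝ)..1, iteratedFDeriv ℝ 2 f (u • θ₁ + (1 - u) • θs)
        ![EuclideanSpace.single i (1:ℝ), EuclideanSpace.single j 1]) :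
    (Istar - α • (1 : Matrix (Fin K) (Fin K) ℝ)).PosSemidef ∧
    ((lmax + α) / lmax) ^ 2 * ((θ₁ - θs) ⬝ᵥ P.mulVec (θ₁ - θs)) ≤
      (θ₁ - θs) ⬝ᵥ (P + (2:ℝ) • Istar + Istar * P⁻¹ * Istar).mulVec (θ₁ - θs) := by
  classical
  set H : EuclideanSpace ℝ (Fin K) → EuclideanSpace ℝ (Fin K) →L[ℝ] EuclideanSpace ℝ (Fin K) →L[ℝ] ℝ := fderiv ℝ (fderiv ℝ f) with hHdef
  set γ : ℝ → EuclideanSpace ℝ (Fin K) := fun u => u • θ₁ + (1 - u) • θs with hγdef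
  set e : Fin K → EuclideanSpace ℝ (Fin K) := fun i => EuclideanSpace.single i (1:ℝ) with hedef
  have hdf : Differentiable ℝ f := hf.differentiable two_ne_zero
  have hF1 : ContDiff ℝ 1 (fderiv ℝ f) := hf.fderiv_right (by norm_num)
  have hFd : Differentiable ℝ (fderiv ℝ f) := hF1.differentiable one_ne_zero
  have hI' : ∀ i j : Fin K, Istar i j = -∫ u in (0:ℝ)..1, H (γ u) (e i) (e j) := by
    intro i j
    rw [hI i j]
    congr 1
    refine intervalIntegral.integral_congr fun u _ => ?_
    rw [iteratedFDeriv_two_apply]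
    simp [hHdef, hedef, hγdef]
  -- symmetry of the second derivative
  have hHsymm : ∀ y v w, H y v w = H y w v := fun y v w =>
    second_derivative_symmetric (f := f) (f' := fderiv ℝ f)
      (fun p => (hdf p).hasFDerivAt) ((hFd y).hasFDerivAt) v w
  have hsymT : Istarᵀ = Istar := by
    ext i j
    rw [Matrix.transpose_apply, hI' j i, hI' i j]
    congr 1
    exact intervalIntegral.integral_congr fun u _ => hHsymm (γ u) (e j) (e i)
  -- continuity facts
  have hHcont : Continuous H := hF1.continuous_fderiv one_ne_zero
  have hγcont : Continuous γ := by
    apply Continuous.add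
    · exact continuous_id.smul continuous_const
    · exact (continuous_const.sub continuous_id).smul continuous_const
  have hcc : ∀ a b : EuclideanSpace ℝ (Fin K), Continuous fun u => H (γ u) a b := by
    intro a b
    exact (ContinuousLinearMap.apply ℝ ℝ b).continuous.comp
      ((ContinuousLinearMap.apply ℝ (EuclideanSpace ℝ (Fin K) →L[ℝ] ℝ) a).continuous.comp (hHcont.comp hγcont))
  -- the quadratic form identity
  have hquad : ∀ z : EuclideanSpace ℝ (Fin K), z ⬝ᵥ Istar *ᵥ z = ∫ u in (0:ℝ)..1, -(H (γ u) z z) := by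
    intro z
    have hz : z = ∑ i, z i • e i := by
      conv_lhs => rw [← (EuclideanSpace.basisFun (Fin K) ℝ).sum_repr z]
      exact Finset.sum_congr rfl fun i _ => by
        rw [EuclideanSpace.basisFun_repr, EuclideanSpace.basisFun_apply]
    have hbil : ∀ y : EuclideanSpace ℝ (Fin K), H y z z = ∑ i, ∑ j, z i * z j * H y (e i) (e j) := by
      intro y
      conv_lhs => rw [hz]
      simp only [map_sum, ContinuousLinearMap.coe_sum', Finset.sum_apply,
        ContinuousLinearMap.sum_apply]
      rw [Finset.sum_comm]
      exact Finset.sum_congr rfl fun i _ => Finset.sum_congr rfl fun j _ => by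
        simp only [_root_.map_smul, ContinuousLinearMap.smul_apply, smul_eq_mul]; ring
    have hexp : z ⬝ᵥ Istar *ᵥ z = ∑ i, ∑ j, (-(z i * z j)) * ∫ u in (0:ℝ)..1, H (γ u) (e i) (e j) := by
      simp only [dotProduct, Matrix.mulVec, dotProduct, Finset.mul_sum]
      refine Finset.sum_congr rfl fun i _ => Finset.sum_congr rfl fun j _ => ?_
      rw [hI' i j]
      ring
    rw [hexp]
    have hstep : ∀ i j : Fin K, (-(z i * z j)) * ∫ u in (0:ℝ)..1, H (γ u) (e i) (e j)
        = ∫ u in (0:ℝ)..1, (-(z i * z j)) * H (γ u) (e i) (e j) := by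
      intro i j
      rw [intervalIntegral.integral_const_mul]
    simp_rw [hstep]
    calc ∑ i, ∑ j, ∫ u in (0:ℝ)..1, (-(z i * z j)) * H (γ u) (e i) (e j)
        = ∑ i, ∫ u in (0:ℝ)..1, ∑ j, (-(z i * z j)) * H (γ u) (e i) (e j) :=
          Finset.sum_congr rfl fun i _ =>
            (intervalIntegral.integral_finset_sum fun j _ =>
              ((continuous_const.mul (hcc (e i) (e j))).intervalIntegrable 0 1)).symm
      _ = ∫ u in (0:ℝ)..1, ∑ i, ∑ j, (-(z i * z j)) * H (γ u) (e i) (e j) :=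
          (intervalIntegral.integral_finset_sum fun i _ =>
            ((continuous_finset_sum _ fun j _ =>
              (continuous_const.mul (hcc (e i) (e j)))).intervalIntegrable 0 1)).symm
      _ = ∫ u in (0:ℝ)..1, -(H (γ u) z z) := by
          refine intervalIntegral.integral_congr fun u _ => ?_
          rw [hbil (γ u)]
          simp [neg_mul, Finset.mul_sum]
  -- lower bound for the quadratic form
  have hqlb : ∀ z : EuclideanSpace ℝ (Fin K), α * (z ⬝ᵥ z) ≤ z ⬝ᵥ Istar *ᵥ z := by
    intro z
    rw [hquad z]
    have hnorm : (‖z‖ : ℝ) ^ 2 = z ⬝ᵥ z := by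
      rw [← real_inner_self_eq_norm_sq]
      rw [EuclideanSpace.inner_eq_star_dotProduct, star_trivial]
    have hpt : ∀ u ∈ Set.Icc (0:ℝ) 1, α * (z ⬝ᵥ z) ≤ -(H (γ u) z z) := by
      intro u _
      have := hess_bound hf hconc (γ u) z
      rw [hnorm] at this
      linarith
    have hconst : (∫ _ in (0:ℝ)..1, α * (z ⬝ᵥ z)) = α * (z ⬝ᵥ z) := by simp
    rw [← hconst]
    apply intervalIntegral.integral_mono_on (by norm_num)
    · exact intervalIntegrable_const
    · exact ((hcc z z).neg.intervalIntegrable 0 1)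
    · exact hpt
  -- part 1
  have herm : (Istar - α • (1 : Matrix (Fin K) (Fin K) ℝ)).IsHermitian := by
    have h1 : Istar.IsHermitian := by
      rw [Matrix.IsHermitian, Matrix.conjTranspose_eq_transpose_of_trivial, hsymT]
    have h2 : (α • (1 : Matrix (Fin K) (Fin K) ℝ)).IsHermitian := by
      rw [Matrix.IsHermitian, Matrix.conjTranspose_eq_transpose_of_trivial]
      ext i j
      rw [Matrix.transpose_apply, Matrix.smul_apply, Matrix.smul_apply, Matrix.one_apply,
        Matrix.one_apply]
      by_cases h : i = j <;> simp [h, eq_comm]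
    exact h1.sub h2
  have hpsd : (Istar - α • (1 : Matrix (Fin K) (Fin K) ℝ)).PosSemidef := by
    refine Matrix.PosSemidef.of_dotProduct_mulVec_nonneg herm fun x => ?_
    have hsx : star x = x := by
      funext i; simp
    rw [hsx, Matrix.sub_mulVec, Matrix.smul_mulVec, Matrix.one_mulVec,
      dotProduct_sub, dotProduct_smul]
    have : α * (x ⬝ᵥ x) ≤ x ⬝ᵥ Istar *ᵥ x := hqlb (WithLp.toLp 2 x)
    simp only [smul_eq_mul]
    linarith
  refine ⟨hpsd, ?_⟩
  -- part 2
  set z : EuclideanSpace ℝ (Fin K) := θ₁ - θs with hzdef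
  set w : Fin K → ℝ := Istar *ᵥ z with hwdef
  have hspec1 := (spec_aux P hP lmax hlmax z).1
  have hspec2 := (spec_aux P hP lmax hlmax w).2
  have hlpos : 0 < lmax := by
    obtain ⟨i, hi⟩ := hlmax.1
    exact hi ▸ hP.eigenvalues_pos i
  set n : ℝ := z ⬝ᵥ z with hndef
  set p : ℝ := z ⬝ᵥ P *ᵥ z with hpdef
  set s : ℝ := z ⬝ᵥ Istar *ᵥ z with hsdef
  set q : ℝ := w ⬝ᵥ P⁻¹ *ᵥ w with hqdef
  have hn : 0 ≤ n := Finset.sum_nonneg fun i _ => mul_self_nonneg _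
  have hs : α * n ≤ s := hqlb z
  have hq0 : 0 ≤ q := by
    have := (hP.inv.posSemidef).dotProduct_mulVec_nonneg w
    rwa [show star w = w by funext i; simp] at this
  have hww : 0 ≤ w ⬝ᵥ w := Finset.sum_nonneg fun i _ => mul_self_nonneg _
  have hcs : s ^ 2 ≤ n * (w ⬝ᵥ w) := by
    have hzw : s = z ⬝ᵥ w := rfl
    calc s ^ 2 = (z ⬝ᵥ w) * (z ⬝ᵥ w) := by rw [hzw]; ring
      _ ≤ (z ⬝ᵥ z) * (w ⬝ᵥ w) := by
          have := real_inner_mul_inner_self_le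
            ((WithLp.equiv 2 (Fin K → ℝ)).symm z) ((WithLp.equiv 2 (Fin K → ℝ)).symm w)
          simpa only [WithLp.equiv_symm_apply, EuclideanSpace.inner_toLp_toLp, star_trivial, dotProduct_comm w] using this
      _ = n * (w ⬝ᵥ w) := rfl
  -- rewrite RHS
  have hvmw : ∀ u : Fin K → ℝ, z ⬝ᵥ Istar *ᵥ u = w ⬝ᵥ u := by
    intro u
    rw [Matrix.dotProduct_mulVec]
    congr 1
    rw [← Matrix.mulVec_transpose, hsymT]
  have hrhs : z ⬝ᵥ (P + (2:ℝ) • Istar + Istar * P⁻¹ * Istar).mulVec z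
      = p + 2 * s + q := by
    rw [Matrix.add_mulVec, Matrix.add_mulVec, dotProduct_add, dotProduct_add,
      Matrix.smul_mulVec, dotProduct_smul]
    have h3 : z ⬝ᵥ (Istar * P⁻¹ * Istar) *ᵥ z = q := by
      rw [← Matrix.mulVec_mulVec, ← Matrix.mulVec_mulVec, hvmw, hqdef, hwdef,
        Matrix.dotProduct_mulVec, Matrix.dotProduct_mulVec]
    rw [h3]
    simp only [smul_eq_mul]
    rfl
  rw [show WithLp.ofLp θ₁ - WithLp.ofLp θs = WithLp.ofLp z from rfl, hrhs, ← hpdef]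
  clear_value z w n p s q
  -- final arithmetic
  have h1 : α * lmax * p ≤ lmax ^ 2 * s := by
    nlinarith [mul_le_mul_of_nonneg_left hspec1 (mul_nonneg hα hlpos.le),
      mul_le_mul_of_nonneg_left hs (sq_nonneg lmax)]
  have h2 : α ^ 2 * n ≤ w ⬝ᵥ w := by
    rcases eq_or_lt_of_le hn with hn0 | hnpos
    · nlinarith [hww]
    · have hsq : (α * n) ^ 2 ≤ s ^ 2 := by
        have hs0 : 0 ≤ α * n := mul_nonneg hα hn
        nlinarith [hs]
      nlinarith [hcs, hnpos]
  have h3 : α ^ 2 * p ≤ lmax ^ 2 * q := by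
    nlinarith [mul_le_mul_of_nonneg_left hspec1 (sq_nonneg α),
      mul_le_mul_of_nonneg_left h2 hlpos.le,
      mul_le_mul_of_nonneg_left hspec2 hlpos.le]
  have hgoal : (lmax + α) ^ 2 * p ≤ (p + 2 * s + q) * lmax ^ 2 := by nlinarith [h1, h3]
  calc ((lmax + α) / lmax) ^ 2 * p = ((lmax + α) ^ 2 * p) / lmax ^ 2 := by
        rw [div_pow]; ring
    _ ≤ p + 2 * s + q := by
        rw [div_le_iff₀ (by positivity)]
        linarith [hgoal]
end
end

section
/- Let σ² > 0, let H be a symmetric positive-definite K×K matrix, x ∈ ℝ^K, y ∈ ℝ, β₀ ∈ ℝ^K. Then the unique maximizer β₁ of β ↦ −(y − βᵀx)²/(2σ²) − (1/2)(β−β₀)ᵀH⁻¹(β−β₀) satisfies β₁ = β₀ + (σ²/(σ² + xᵀHx)) · H · (x(y − β₀ᵀx)/σ²). -/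
open Matrix

noncomputable section

lemma symmDot {K : ℕ} {M : Matrix (Fin K) (Fin K) ℝ} (hM : Mᵀ = M) (a b : Fin K → ℝ) :
    a ⬝ᵥ M.mulVec b = b ⬝ᵥ M.mulVec a := by
  rw [dotProduct_mulVec, ← mulVec_transpose, hM, dotProduct_comm]

theorem stmt15 {K : ℕ} (σ2 : ℝ) (hσ2 : 0 < σ2)
    (H : Matrix (Fin K) (Fin K) ℝ) (hH : H.PosDef)
    (x β₀ β₁ : Fin K → ℝ) (y : ℝ)
    (hmax : ∀ β : Fin K → ℝ,
      -(y - β ⬝ᵥ x) ^ 2 / (2 * σ2) -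
          (1/2) * ((β - β₀) ⬝ᵥ (H⁻¹).mulVec (β - β₀)) ≤
        -(y - β₁ ⬝ᵥ x) ^ 2 / (2 * σ2) -
          (1/2) * ((β₁ - β₀) ⬝ᵥ (H⁻¹).mulVec (β₁ - β₀)))
    (huniq : ∀ β : Fin K → ℝ,
      (∀ β' : Fin K → ℝ,
        -(y - β' ⬝ᵥ x) ^ 2 / (2 * σ2) -
            (1/2) * ((β' - β₀) ⬝ᵥ (H⁻¹).mulVec (β' - β₀)) ≤
          -(y - β ⬝ᵥ x) ^ 2 / (2 * σ2) -
            (1/2) * ((β - β₀) ⬝ᵥ (H⁻¹).mulVec (β - β₀))) → β = β₁) :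
    β₁ = β₀ + (σ2 / (σ2 + x ⬝ᵥ H.mulVec x)) •
      H.mulVec (((y - β₀ ⬝ᵥ x) / σ2) • x) := by
  have hHsymm : Hᵀ = H := hH.isHermitian.eq
  have hHinvsymm : (H⁻¹)ᵀ = H⁻¹ := by rw [transpose_nonsing_inv, hHsymm]
  have hdet : IsUnit H.det := isUnit_iff_ne_zero.mpr hH.det_pos.ne'
  have hinv1 : (H⁻¹).mulVec (H.mulVec x) = x := by
    rw [mulVec_mulVec, nonsing_inv_mul H hdet, one_mulVec]
  set q : ℝ := x ⬝ᵥ H.mulVec x with hq_def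
  have hq : 0 ≤ q := by simpa using hH.posSemidef.dotProduct_mulVec_nonneg x
  have hc : 0 < σ2 + q := by linarith
  obtain ⟨r, hr⟩ : ∃ r : ℝ, r * (σ2 + q) = y - β₀ ⬝ᵥ x :=
    ⟨(y - β₀ ⬝ᵥ x) / (σ2 + q), div_mul_cancel₀ _ hc.ne'⟩
  set β' : Fin K → ℝ := β₀ + r • H.mulVec x with hβ'_def
  -- key scalar identities for β'
  have hβ'x : β' ⬝ᵥ x = β₀ ⬝ᵥ x + r * q := by
    simp [hβ'_def, add_dotProduct, smul_dotProduct, smul_eq_mul, hq_def,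
      dotProduct_comm (H.mulVec x) x]
  have hβ'sub : β' - β₀ = r • H.mulVec x := by
    simp [hβ'_def]
  have hβ'Q : (β' - β₀) ⬝ᵥ (H⁻¹).mulVec (β' - β₀) = r ^ 2 * q := by
    rw [hβ'sub]
    simp [mulVec_smul, hinv1, smul_dotProduct, dotProduct_smul, smul_eq_mul,
      dotProduct_comm (H.mulVec x) x, hq_def]
    ring
  have hkey : β' = β₁ := by
    apply huniq
    intro β
    set δ : Fin K → ℝ := β - β' with hδ_def
    have hβsub : β - β₀ = δ + r • H.mulVec x := by
      simp [hδ_def, hβ'_def]; abel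
    set s : ℝ := δ ⬝ᵥ x with hs_def
    set t : ℝ := δ ⬝ᵥ (H⁻¹).mulVec δ with ht_def
    have ht : 0 ≤ t := by simpa using hH.inv.posSemidef.dotProduct_mulVec_nonneg δ
    have hβx : β ⬝ᵥ x = β₀ ⬝ᵥ x + s + r * q := by
      have := congrArg (· ⬝ᵥ x) hβsub
      simp only [sub_dotProduct, add_dotProduct, smul_dotProduct, smul_eq_mul] at this
      rw [dotProduct_comm (H.mulVec x) x] at this
      linarith [this]
    have hcross : (H.mulVec x) ⬝ᵥ (H⁻¹).mulVec δ = s := by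
      rw [symmDot hHinvsymm, hinv1, hs_def]
    have hβQ : (β - β₀) ⬝ᵥ (H⁻¹).mulVec (β - β₀) = t + 2 * r * s + r ^ 2 * q := by
      rw [hβsub]
      simp only [mulVec_add, mulVec_smul, hinv1, add_dotProduct, dotProduct_add,
        smul_dotProduct, dotProduct_smul, smul_eq_mul, hcross]
      rw [dotProduct_comm (H.mulVec x) x]
      simp only [← ht_def, ← hs_def, ← hq_def]
      ring
    rw [hβx, hβ'x, hβQ, hβ'Q]
    have h1 : y - (β₀ ⬝ᵥ x + s + r * q) = r * σ2 - s := by linear_combination -hr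
    have h2 : y - (β₀ ⬝ᵥ x + r * q) = r * σ2 := by linear_combination -hr
    rw [h1, h2]
    have hdiff : -(r * σ2 - s) ^ 2 / (2 * σ2) - 1 / 2 * (t + 2 * r * s + r ^ 2 * q)
        = (-(r * σ2) ^ 2 / (2 * σ2) - 1 / 2 * (r ^ 2 * q)) - s ^ 2 / (2 * σ2) - t / 2 := by
      field_simp
      ring
    rw [hdiff]
    have hs2 : 0 ≤ s ^ 2 / (2 * σ2) := div_nonneg (sq_nonneg s) (by linarith)
    linarith
  rw [← hkey, hβ'_def]
  congr 1
  rw [mulVec_smul, smul_smul]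
  congr 1
  have : r = (y - β₀ ⬝ᵥ x) / (σ2 + q) := eq_div_of_mul_eq hc.ne' hr
  rw [this]
  field_simp
end
end

section
/- Fix H > 0, σ > 0, and an observation y ∈ ℝ. For τ ∈ (0,1) and a prediction q ∈ ℝ, define the explicit update E(q,τ) := q − 1[y < q]·H(1−τ)/σ + 1[y > q]·Hτ/σ, and the implicit update U(q,τ) := min{y, E(q,τ)} if y > q, U(q,τ) := max{y, E(q,τ)} if y ≤ q. Then for all 0 < τ₁ < τ₂ < 1 and all predictions q₁ ≤ q₂ (with q₁ ≤ q₂): U(q₁, τ₁) ≤ U(q₂, τ₂). That is, implicit quantile updates preserve the ordering of quantiles. -/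
noncomputable section

/-- Explicit (adaptive CAViaR) quantile update. -/
def Equant (H σ y q τ : ℝ) : ℝ :=
  q - (if y < q then H * (1 - τ) / σ else 0) + (if y > q then H * τ / σ else 0)

/-- Implicit score-driven quantile update: capped at the observation. -/
def Uquant (H σ y q τ : ℝ) : ℝ :=
  if y > q then min y (Equant H σ y q τ) else max y (Equant H σ y q τ)

theorem stmt16 (H σ y : ℝ) (hH : 0 < H) (hσ : 0 < σ) :
    ∀ τ₁ τ₂ q₁ q₂ : ℝ, 0 < τ₁ → τ₁ < τ₂ → τ₂ < 1 → q₁ ≤ q₂ →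
      Uquant H σ y q₁ τ₁ ≤ Uquant H σ y q₂ τ₂ := by
  intro τ₁ τ₂ q₁ q₂ h1 h2 h3 h4
  have p1 : 0 < H * τ₁ / σ := div_pos (mul_pos hH h1) hσ
  have p2 : 0 < H * τ₂ / σ := div_pos (mul_pos hH (by linarith)) hσ
  have p3 : 0 < H * (1 - τ₁) / σ := div_pos (mul_pos hH (by linarith)) hσ
  have p4 : 0 < H * (1 - τ₂) / σ := div_pos (mul_pos hH (by linarith)) hσ
  have m1 : H * τ₁ / σ ≤ H * τ₂ / σ := by gcongr
  have m2 : H * (1 - τ₂) / σ ≤ H * (1 - τ₁) / σ := by gcongr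
  unfold Uquant Equant
  split_ifs <;>
    first
      | linarith
      | exact min_le_min le_rfl (by linarith)
      | exact le_trans (min_le_left _ _) (le_max_left _ _)
      | exact max_le_max le_rfl (by linarith)
      | exact max_le (le_max_left _ _)
          (le_trans (by linarith) (le_max_left _ _))
end
end

section
/- Fix ν > 0, σ > 0, H > 0, a prediction μ₀ ∈ ℝ, and an observation y ∈ ℝ with e := y − μ₀ ≠ 0. Suppose w ∈ ℝ satisfies the cubic equation (1/ν)(e²/σ²)(1−w)² w + w − H(1−w) = 0. Then w ∈ (0, H/(1+H)], and hence the implicit Student's-t location update μ₁ := μ₀ + w·e lies strictly between μ₀ and y (inclusive of neither endpoint unless w = 0 or 1, which cannot occur for 0 < H < ∞): μ₁ ∈ (min{μ₀,y}, max{μ₀,y}). -/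
theorem stmt17 (ν σ H μ₀ y w : ℝ) (hν : 0 < ν) (hσ : 0 < σ) (hH : 0 < H)
    (he : y - μ₀ ≠ 0)
    (hcubic : (1 / ν) * ((y - μ₀) ^ 2 / σ ^ 2) * (1 - w) ^ 2 * w + w -
      H * (1 - w) = 0) :
    w ∈ Set.Ioc 0 (H / (1 + H)) ∧
      μ₀ + w * (y - μ₀) ∈ Set.Ioo (min μ₀ y) (max μ₀ y) := by
  have hc : 0 < (1 / ν) * ((y - μ₀) ^ 2 / σ ^ 2) := by
    have h1 : 0 < (y - μ₀) ^ 2 := by positivity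
    positivity
  set c := (1 / ν) * ((y - μ₀) ^ 2 / σ ^ 2) with hcdef
  have hw0 : 0 < w := by
    by_contra hle
    push_neg at hle
    nlinarith [mul_nonpos_of_nonneg_of_nonpos (mul_nonneg hc.le (sq_nonneg (1 - w))) hle]
  have hwle : w ≤ H / (1 + H) := by
    rw [le_div_iff₀ (by linarith)]
    nlinarith [mul_nonneg (mul_nonneg hc.le (sq_nonneg (1 - w))) hw0.le]
  have hw1 : w < 1 := lt_of_le_of_lt hwle (by rw [div_lt_one (by linarith)]; linarith)
  refine ⟨⟨hw0, hwle⟩, ?_⟩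
  rcases lt_or_gt_of_ne (sub_ne_zero.mp he) with h | h
  · -- y < μ₀, e < 0
    have he' : y - μ₀ < 0 := by linarith
    rw [min_eq_right h.le, max_eq_left h.le]
    constructor
    · nlinarith
    · nlinarith
  · have he' : 0 < y - μ₀ := by linarith
    rw [min_eq_left h.le, max_eq_right h.le]
    constructor
    · nlinarith
    · nlinarith
end

section
/- Let μ ∈ ℝ, σ > 0, ν > 0, γ > 0, and set ξ := √ν·σ + γ. Then ∫_{−∞}^{∞} [(y − μ)/(1 + (y−μ)²/(ν σ²))] · (1/(π γ)) · (1/(1 + y²/γ²)) dy = −μ ν σ²/(μ² + ξ²). -/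
open MeasureTheory Real Filter Topology

set_option maxHeartbeats 1000000

private lemma key18 (μ a γ : ℝ) (hμ : μ ≠ 0) (ha : 0 < a) (hγ : 0 < γ) :
    (∫ y : ℝ, a ^ 2 * (y - μ) / ((y - μ) ^ 2 + a ^ 2) * (γ / (π * (y ^ 2 + γ ^ 2))))
      = -μ * a ^ 2 / (μ ^ 2 + (a + γ) ^ 2) := by
  have hπ : (0:ℝ) < π := pi_pos
  set Q : ℝ := (μ ^ 2 + (a + γ) ^ 2) * (μ ^ 2 + (a - γ) ^ 2) with hQdef
  set C : ℝ := (μ ^ 2 - a ^ 2 + γ ^ 2) / Q with hCdef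
  set D : ℝ := 2 * μ * a ^ 2 / Q with hDdef
  set B : ℝ := -μ * (μ ^ 2 + a ^ 2 + γ ^ 2) / Q with hBdef
  set k : ℝ := a ^ 2 * γ / π with hkdef
  set F : ℝ → ℝ := fun y => k * (C / 2 *
      (Real.log ((y - μ) ^ 2 + a ^ 2) - Real.log (y ^ 2 + γ ^ 2))
      + D / a * Real.arctan ((y - μ) / a) + B / γ * Real.arctan (y / γ)) with hFdef
  set g : ℝ → ℝ := fun y =>
      a ^ 2 * (y - μ) / ((y - μ) ^ 2 + a ^ 2) * (γ / (π * (y ^ 2 + γ ^ 2))) with hgdef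
  have h5 : (0:ℝ) < μ ^ 2 + (a + γ) ^ 2 := by positivity
  have h6 : (0:ℝ) < μ ^ 2 + (a - γ) ^ 2 := by positivity
  -- derivative
  have hderiv : ∀ y : ℝ, HasDerivAt F (g y) y := by
    intro y
    have h1 : (0:ℝ) < (y - μ) ^ 2 + a ^ 2 := by positivity
    have h2 : (0:ℝ) < y ^ 2 + γ ^ 2 := by positivity
    have h3 : (0:ℝ) < 1 + ((y - μ) / a) ^ 2 := by positivity
    have h4 : (0:ℝ) < 1 + (y / γ) ^ 2 := by positivity
    have d1 : HasDerivAt (fun y : ℝ => (y - μ) ^ 2 + a ^ 2) (2 * (y - μ)) y := by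
      simpa using (((hasDerivAt_id y).sub_const μ).pow 2).add_const (a ^ 2)
    have d2 : HasDerivAt (fun y : ℝ => y ^ 2 + γ ^ 2) (2 * y) y := by
      simpa using ((hasDerivAt_id y).pow 2).add_const (γ ^ 2)
    have l1 : HasDerivAt (fun y : ℝ => (y - μ) / a) (1 / a) y := by
      simpa using ((hasDerivAt_id y).sub_const μ).div_const a
    have l2 : HasDerivAt (fun y : ℝ => y / γ) (1 / γ) y := by
      simpa using (hasDerivAt_id y).div_const γ
    have d3 := (Real.hasDerivAt_arctan ((y - μ) / a)).comp y l1
    have d4 := (Real.hasDerivAt_arctan (y / γ)).comp y l2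
    have hd : HasDerivAt F
        (k * (C / 2 * (2 * (y - μ) / ((y - μ) ^ 2 + a ^ 2) - 2 * y / (y ^ 2 + γ ^ 2))
          + D / a * (1 / (1 + ((y - μ) / a) ^ 2) * (1 / a))
          + B / γ * (1 / (1 + (y / γ) ^ 2) * (1 / γ)))) y :=
      ((((d1.log h1.ne').sub (d2.log h2.ne')).const_mul (C / 2)).add
        (d3.const_mul (D / a))).add (d4.const_mul (B / γ)) |>.const_mul k
    have heq : (k * (C / 2 * (2 * (y - μ) / ((y - μ) ^ 2 + a ^ 2) - 2 * y / (y ^ 2 + γ ^ 2))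
          + D / a * (1 / (1 + ((y - μ) / a) ^ 2) * (1 / a))
          + B / γ * (1 / (1 + (y / γ) ^ 2) * (1 / γ)))) = g y := by
      simp only [hgdef, hkdef, hCdef, hDdef, hBdef, hQdef]
      have hπ' : π ≠ 0 := pi_ne_zero
      field_simp
      ring
    rwa [heq] at hd
  -- integrability
  have hint : Integrable g := by
    have h2int : Integrable (fun y : ℝ => γ / (π * (y ^ 2 + γ ^ 2))) := by
      have h := (integrable_inv_one_add_sq.comp_div hγ.ne')
      refine (h.const_mul (1 / (π * γ))).congr (Filter.Eventually.of_forall fun y => ?_)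
      have h2 : (0:ℝ) < y ^ 2 + γ ^ 2 := by positivity
      have h3 : (0:ℝ) < 1 + (y / γ) ^ 2 := by positivity
      field_simp
      ring
    have hc : Continuous (fun y : ℝ => a ^ 2 * (y - μ) / ((y - μ) ^ 2 + a ^ 2)) := by
      apply Continuous.div (by fun_prop) (by fun_prop)
      intro y
      positivity
    refine (h2int.bdd_mul (c := a / 2) hc.aestronglyMeasurable (Filter.Eventually.of_forall fun y => ?_))
    rw [Real.norm_eq_abs]
    have h1 : (0:ℝ) < (y - μ) ^ 2 + a ^ 2 := by positivity
    rw [abs_div, abs_of_pos h1, div_le_iff₀ h1, abs_mul,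
      abs_of_pos (by positivity : (0:ℝ) < a ^ 2)]
    nlinarith [sq_nonneg (|y - μ| - a), sq_abs (y - μ), abs_nonneg (y - μ)]
  -- limits
  have hlogTop : Tendsto (fun y : ℝ =>
      Real.log ((y - μ) ^ 2 + a ^ 2) - Real.log (y ^ 2 + γ ^ 2)) atTop (𝓝 0) := by
    have hφ : ContinuousAt (fun u : ℝ =>
        ((1 - μ * u) ^ 2 + a ^ 2 * u ^ 2) / (1 + γ ^ 2 * u ^ 2)) 0 := by
      apply ContinuousAt.div (by fun_prop) (by fun_prop) (by norm_num)
    have hr : Tendsto (fun y : ℝ => ((y - μ) ^ 2 + a ^ 2) / (y ^ 2 + γ ^ 2)) atTop (𝓝 1) := by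
      have h0 : Tendsto (fun y : ℝ => y⁻¹) atTop (𝓝 (0:ℝ)) := tendsto_inv_atTop_zero
      have hcomp := hφ.tendsto.comp h0
      simp only [Function.comp_def] at hcomp
      have h1 : ((1 - μ * (0:ℝ)) ^ 2 + a ^ 2 * 0 ^ 2) / (1 + γ ^ 2 * 0 ^ 2) = 1 := by norm_num
      rw [h1] at hcomp
      refine hcomp.congr' ?_
      filter_upwards [eventually_gt_atTop 0] with y hy
      have hy' : y ≠ 0 := hy.ne'
      field_simp
    have hc := (Real.continuousAt_log one_ne_zero).tendsto.comp hr
    simp only [Function.comp, Real.log_one] at hc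
    refine hc.congr' ?_
    filter_upwards [eventually_gt_atTop 0] with y hy
    have h1 : (0:ℝ) < (y - μ) ^ 2 + a ^ 2 := by positivity
    have h2 : (0:ℝ) < y ^ 2 + γ ^ 2 := by positivity
    simp only [Function.comp_apply]
    rw [Real.log_div h1.ne' h2.ne']
  have hlogBot : Tendsto (fun y : ℝ =>
      Real.log ((y - μ) ^ 2 + a ^ 2) - Real.log (y ^ 2 + γ ^ 2)) atBot (𝓝 0) := by
    have hφ : ContinuousAt (fun u : ℝ =>
        ((1 - μ * u) ^ 2 + a ^ 2 * u ^ 2) / (1 + γ ^ 2 * u ^ 2)) 0 := by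
      apply ContinuousAt.div (by fun_prop) (by fun_prop) (by norm_num)
    have hr : Tendsto (fun y : ℝ => ((y - μ) ^ 2 + a ^ 2) / (y ^ 2 + γ ^ 2)) atBot (𝓝 1) := by
      have h0 : Tendsto (fun y : ℝ => y⁻¹) atBot (𝓝 (0:ℝ)) := by
        have := (tendsto_inv_atTop_zero (𝕜 := ℝ)).comp tendsto_neg_atBot_atTop
        simpa [Function.comp_def] using this.neg
      have hcomp := hφ.tendsto.comp h0
      simp only [Function.comp_def] at hcomp
      have h1 : ((1 - μ * (0:ℝ)) ^ 2 + a ^ 2 * 0 ^ 2) / (1 + γ ^ 2 * 0 ^ 2) = 1 := by norm_num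
      rw [h1] at hcomp
      refine hcomp.congr' ?_
      filter_upwards [eventually_lt_atBot 0] with y hy
      have hy' : y ≠ 0 := hy.ne
      field_simp
    have hc := (Real.continuousAt_log one_ne_zero).tendsto.comp hr
    simp only [Function.comp, Real.log_one] at hc
    refine hc.congr' ?_
    filter_upwards [eventually_lt_atBot 0] with y hy
    have h1 : (0:ℝ) < (y - μ) ^ 2 + a ^ 2 := by positivity
    have h2 : (0:ℝ) < y ^ 2 + γ ^ 2 := by positivity
    simp only [Function.comp_apply]
    rw [Real.log_div h1.ne' h2.ne']
  have harc1Top : Tendsto (fun y : ℝ => Real.arctan ((y - μ) / a)) atTop (𝓝 (π / 2)) := by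
    have h1 : Tendsto (fun y : ℝ => (y - μ) / a) atTop atTop :=
      (tendsto_atTop_add_const_right atTop (-μ) tendsto_id).atTop_div_const ha
    exact (tendsto_nhds_of_tendsto_nhdsWithin Real.tendsto_arctan_atTop).comp h1
  have harc2Top : Tendsto (fun y : ℝ => Real.arctan (y / γ)) atTop (𝓝 (π / 2)) := by
    have h1 : Tendsto (fun y : ℝ => y / γ) atTop atTop :=
      tendsto_id.atTop_div_const hγ
    exact (tendsto_nhds_of_tendsto_nhdsWithin Real.tendsto_arctan_atTop).comp h1
  have harc1Bot : Tendsto (fun y : ℝ => Real.arctan ((y - μ) / a)) atBot (𝓝 (-(π / 2))) := by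
    have h1 : Tendsto (fun y : ℝ => (y - μ) / a) atBot atBot :=
      (tendsto_atBot_add_const_right atBot (-μ) tendsto_id).atBot_div_const ha
    exact (tendsto_nhds_of_tendsto_nhdsWithin Real.tendsto_arctan_atBot).comp h1
  have harc2Bot : Tendsto (fun y : ℝ => Real.arctan (y / γ)) atBot (𝓝 (-(π / 2))) := by
    have h1 : Tendsto (fun y : ℝ => y / γ) atBot atBot :=
      tendsto_id.atBot_div_const hγ
    exact (tendsto_nhds_of_tendsto_nhdsWithin Real.tendsto_arctan_atBot).comp h1
  have hFtop : Tendsto F atTop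
      (𝓝 (k * (C / 2 * 0 + D / a * (π / 2) + B / γ * (π / 2)))) := by
    exact (((hlogTop.const_mul (C / 2)).add (harc1Top.const_mul (D / a))).add
      (harc2Top.const_mul (B / γ))).const_mul k
  have hFbot : Tendsto F atBot
      (𝓝 (k * (C / 2 * 0 + D / a * (-(π / 2)) + B / γ * (-(π / 2))))) := by
    exact (((hlogBot.const_mul (C / 2)).add (harc1Bot.const_mul (D / a))).add
      (harc2Bot.const_mul (B / γ))).const_mul k
  -- FTC
  have hIoi : (∫ y in Set.Ioi (0:ℝ), g y)
      = k * (C / 2 * 0 + D / a * (π / 2) + B / γ * (π / 2)) - F 0 :=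
    integral_Ioi_of_hasDerivAt_of_tendsto' (fun x _ => hderiv x) hint.integrableOn hFtop
  have hIic : (∫ y in Set.Iic (0:ℝ), g y)
      = F 0 - k * (C / 2 * 0 + D / a * (-(π / 2)) + B / γ * (-(π / 2))) :=
    integral_Iic_of_hasDerivAt_of_tendsto' (fun x _ => hderiv x) hint.integrableOn hFbot
  have hsplit := intervalIntegral.integral_Iic_add_Ioi (b := (0:ℝ)) hint.integrableOn hint.integrableOn
  rw [hIic, hIoi] at hsplit
  rw [← hsplit, show ∀ x lb lt : ℝ, (x - lb) + (lt - x) = lt - lb from fun _ _ _ => by ring]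
  simp only [hkdef, hCdef, hDdef, hBdef, hQdef]
  have hπ' : π ≠ 0 := pi_ne_zero
  field_simp
  ring

theorem stmt18 (μ σ ν γ : ℝ) (hσ : 0 < σ) (hν : 0 < ν) (hγ : 0 < γ) :
    ∫ y : ℝ,
        ((y - μ) / (1 + (y - μ) ^ 2 / (ν * σ ^ 2))) *
          (1 / (π * γ) * (1 / (1 + y ^ 2 / γ ^ 2))) =
      -μ * ν * σ ^ 2 / (μ ^ 2 + (Real.sqrt ν * σ + γ) ^ 2) := by
  set a : ℝ := Real.sqrt ν * σ with hadef
  have ha : 0 < a := mul_pos (Real.sqrt_pos.mpr hν) hσ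
  have ha2 : a ^ 2 = ν * σ ^ 2 := by
    rw [hadef, mul_pow, Real.sq_sqrt hν.le]
  by_cases hμ : μ = 0
  · subst hμ
    simp only [sub_zero, neg_zero, zero_mul, zero_div]
    set f : ℝ → ℝ := fun y =>
      y / (1 + y ^ 2 / (ν * σ ^ 2)) * (1 / (π * γ) * (1 / (1 + y ^ 2 / γ ^ 2))) with hfdef
    have hodd : ∀ x : ℝ, f (-x) = -f x := by
      intro x
      simp only [hfdef]
      ring_nf
    have h1 : (∫ x : ℝ, f (-x)) = ∫ x : ℝ, f x := integral_neg_eq_self f _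
    have h2 : (∫ x : ℝ, f (-x)) = -∫ x : ℝ, f x := by
      simp_rw [hodd]
      exact integral_neg f
    have : (∫ x : ℝ, f x) = 0 := by linarith [h1, h2]
    simpa using this
  · have h := key18 μ a γ hμ ha hγ
    have hrhs : -μ * ν * σ ^ 2 / (μ ^ 2 + (a + γ) ^ 2)
        = -μ * a ^ 2 / (μ ^ 2 + (a + γ) ^ 2) := by rw [ha2]; ring
    rw [hrhs, ← h]
    congr 1
    funext y
    have h1 : (0:ℝ) < (y - μ) ^ 2 + a ^ 2 := by positivity
    have h2 : (0:ℝ) < y ^ 2 + γ ^ 2 := by positivity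
    have h3 : (0:ℝ) < 1 + (y - μ) ^ 2 / a ^ 2 := by positivity
    have h4 : (0:ℝ) < 1 + y ^ 2 / γ ^ 2 := by positivity
    have hπ' : π ≠ 0 := pi_ne_zero
    rw [← ha2]
    field_simp
    ring
end
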